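/- arXiv:0909.0827 — 6 statements merged into one kernel-verified Lean document; each statement's English description precedes it below -/
import Mathlib

section
/- Let r, l ≥ 0 and set f(x) = |x|^r, g(x) = |x|^l. For each n ∈ ℕ let M_n ∈ ℕ with M_n → ∞, and let μ_{n,m}, μ'_{n,m}, μ''_{n,m} (1 ≤ m ≤ M_n) be real random variables. Assume there exists ε > 0 such that for every q ∈ (0, 2(r+l)+ε) there is a constant C_q with E[(1 + |μ_{n,m}| + |μ'_{n,m}| + |μ''_{n,m}|)^q] ≤ C_q for all n and all 1 ≤ m ≤ M_n, and assume (1/M_n) Σ_{m=1}^{M_n} E[|μ'_{n,m} − μ''_{n,m}|²] → 0 as n → ∞. Then (1/M_n) Σ_{m=1}^{M_n} E[f(μ_{n,m})² (g(μ'_{n,m}) − g(μ''_{n,m}))²] → 0 as n → ∞. -/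
open MeasureTheory ProbabilityTheory Filter
open scoped ENNReal


open MeasureTheory Filter

-- subadditivity consequence, l ≤ 1
private lemma aux_rpow_sub_le_of_le_one {a b L : ℝ} (hb : 0 ≤ b) (hba : b ≤ a)
    (hL0 : 0 ≤ L) (hL1 : L ≤ 1) : a ^ L - b ^ L ≤ (a - b) ^ L := by
  have ha : 0 ≤ a := hb.trans hba
  have hab : 0 ≤ a - b := sub_nonneg.2 hba
  have h := NNReal.rpow_add_le_add_rpow (a - b).toNNReal b.toNNReal hL0 hL1
  have h2 : (a - b).toNNReal + b.toNNReal = a.toNNReal := by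
    rw [← Real.toNNReal_add hab hb, sub_add_cancel]
  rw [h2] at h
  have h3 : (a.toNNReal : ℝ) ^ L ≤ ((a - b).toNNReal : ℝ) ^ L + (b.toNNReal : ℝ) ^ L := by
    exact_mod_cast h
  rw [Real.coe_toNNReal _ ha, Real.coe_toNNReal _ hab, Real.coe_toNNReal _ hb] at h3
  linarith

-- Bernoulli consequence, l ≥ 1
private lemma aux_rpow_sub_le_of_one_le {a b L : ℝ} (hb : 0 ≤ b) (hba : b ≤ a)
    (hL : 1 ≤ L) : a ^ L - b ^ L ≤ L * a ^ (L - 1) * (a - b) := by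
  rcases eq_or_lt_of_le (hb.trans hba) with ha | ha
  · have hb0 : b = 0 := le_antisymm (hba.trans ha.symm.le) hb
    have ha0 : a = 0 := le_antisymm ha.symm.le (hb.trans hba)
    subst hb0; subst ha0
    simp [Real.zero_rpow (by linarith : L ≠ 0)]
  · have hs : -1 ≤ (b - a) / a := by
      rw [neg_le, ← neg_div]
      rw [div_le_one ha]
      linarith
    have key := one_add_mul_self_le_rpow_one_add hs hL
    have h1 : 1 + (b - a) / a = b / a := by field_simp; ring
    rw [h1, Real.div_rpow hb ha.le] at key
    have haL : 0 < a ^ L := Real.rpow_pos_of_pos ha L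
    have key2 : (1 + L * ((b - a) / a)) * a ^ L ≤ b ^ L := (le_div_iff₀ haL).1 key
    have h3 : a ^ L / a = a ^ (L - 1) := by
      rw [Real.rpow_sub ha, Real.rpow_one]
    have h4 : L * ((b - a) / a) * a ^ L = L * (b - a) * a ^ (L - 1) := by
      rw [← h3]; field_simp
    nlinarith [key2, h4]

-- key: |a^l - b^l| ≤ max l 1 * Z^(l-s) * |y-z|^s
private lemma aux_abs_rpow_sub {l s Z : ℝ} (hs0 : 0 < s) (hsl : s ≤ l) (hs1 : s ≤ 1)
    (hZ1 : 1 ≤ Z) : ∀ y z : ℝ, |y| ≤ Z → |z| ≤ Z →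
    |(|y| ^ l - |z| ^ l)| ≤ max l 1 * Z ^ (l - s) * |y - z| ^ s := by
  have hl0 : 0 < l := hs0.trans_le hsl
  have hZ0 : 0 < Z := lt_of_lt_of_le one_pos hZ1
  have main : ∀ y z : ℝ, |z| ≤ |y| → |y| ≤ Z → |z| ≤ Z →
      |y| ^ l - |z| ^ l ≤ max l 1 * Z ^ (l - s) * |y - z| ^ s := by
    intro y z hzy hyZ hzZ
    have hb : (0:ℝ) ≤ |z| := abs_nonneg _
    have habd : |y| - |z| ≤ |y - z| := abs_sub_abs_le_abs_sub y z
    have hab0 : 0 ≤ |y| - |z| := sub_nonneg.2 hzy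
    have habZ : |y| - |z| ≤ Z := by linarith
    have hd0 : (0:ℝ) ≤ |y - z| := abs_nonneg _
    rcases le_total l 1 with hl1 | hl1
    · have h1 : |y| ^ l - |z| ^ l ≤ (|y| - |z|) ^ l :=
        aux_rpow_sub_le_of_le_one hb hzy hl0.le hl1
      have h2 : (|y| - |z|) ^ l = (|y| - |z|) ^ (l - s) * (|y| - |z|) ^ s := by
        rw [← Real.rpow_add' hab0 (by rw [sub_add_cancel]; exact hl0.ne')]
        rw [sub_add_cancel]
      have h3 : (|y| - |z|) ^ (l - s) ≤ Z ^ (l - s) :=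
        Real.rpow_le_rpow hab0 habZ (by linarith)
      have h4 : (|y| - |z|) ^ s ≤ |y - z| ^ s := Real.rpow_le_rpow hab0 habd hs0.le
      calc |y| ^ l - |z| ^ l ≤ (|y| - |z|) ^ (l - s) * (|y| - |z|) ^ s := by rw [← h2]; exact h1
        _ ≤ Z ^ (l - s) * |y - z| ^ s := by
            apply mul_le_mul h3 h4 (Real.rpow_nonneg hab0 s) (Real.rpow_nonneg hZ0.le _)
        _ ≤ max l 1 * Z ^ (l - s) * |y - z| ^ s := by
            rw [mul_assoc]
            exact le_mul_of_one_le_left (by positivity) (le_max_right l 1)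
    · have h1 : |y| ^ l - |z| ^ l ≤ l * |y| ^ (l - 1) * (|y| - |z|) :=
        aux_rpow_sub_le_of_one_le hb hzy hl1
      have h5 : |y| ^ (l - 1) ≤ Z ^ (l - 1) :=
        Real.rpow_le_rpow (abs_nonneg _) hyZ (by linarith)
      have h6 : |y| - |z| ≤ Z ^ (1 - s) * |y - z| ^ s := by
        have e : |y| - |z| = (|y| - |z|) ^ (1 - s) * (|y| - |z|) ^ s := by
          rw [← Real.rpow_add' hab0 (by norm_num), sub_add_cancel, Real.rpow_one]
        rw [e]
        apply mul_le_mul (Real.rpow_le_rpow hab0 habZ (by linarith))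
          (Real.rpow_le_rpow hab0 habd hs0.le) (Real.rpow_nonneg hab0 s)
          (Real.rpow_nonneg hZ0.le _)
      have h7 : Z ^ (l - 1) * Z ^ (1 - s) = Z ^ (l - s) := by
        rw [← Real.rpow_add hZ0]; ring_nf
      calc |y| ^ l - |z| ^ l ≤ l * |y| ^ (l - 1) * (|y| - |z|) := h1
        _ ≤ l * Z ^ (l - 1) * (Z ^ (1 - s) * |y - z| ^ s) := by
            apply mul_le_mul (mul_le_mul le_rfl h5 (Real.rpow_nonneg (abs_nonneg _) _)
              (by positivity)) h6 hab0 (by positivity)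
        _ = l * (Z ^ (l - 1) * Z ^ (1 - s)) * |y - z| ^ s := by ring
        _ = l * Z ^ (l - s) * |y - z| ^ s := by rw [h7]
        _ ≤ max l 1 * Z ^ (l - s) * |y - z| ^ s := by
            apply mul_le_mul_of_nonneg_right (mul_le_mul_of_nonneg_right
              (le_max_left l 1) (by positivity)) (by positivity)
  intro y z hy hz
  rcases le_total (|z|) (|y|) with h | h
  · have hge : 0 ≤ |y| ^ l - |z| ^ l :=
      sub_nonneg.2 (Real.rpow_le_rpow (abs_nonneg z) h hl0.le)
    rw [abs_of_nonneg hge]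
    exact main y z h hy hz
  · have hge : 0 ≤ |z| ^ l - |y| ^ l :=
      sub_nonneg.2 (Real.rpow_le_rpow (abs_nonneg y) h hl0.le)
    rw [abs_sub_comm, abs_of_nonneg hge, abs_sub_comm y z]
    exact main z y h hz hy
private lemma aux_pointwise {r l s x y z : ℝ} (hr : 0 ≤ r) (hs0 : 0 < s) (hsl : s ≤ l)
    (hs1 : s ≤ 1) :
    (|x| ^ r) ^ 2 * (|y| ^ l - |z| ^ l) ^ 2 ≤
      (max l 1) ^ 2 * (1 + |x| + |y| + |z|) ^ (2 * (r + l) - 2 * s) * ((y - z) ^ 2) ^ s := by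
  set Z : ℝ := 1 + |x| + |y| + |z| with hZdef
  have hZ1 : 1 ≤ Z := by
    have := abs_nonneg x; have := abs_nonneg y; have := abs_nonneg z
    simp only [hZdef]; linarith
  have hZ0 : (0:ℝ) < Z := lt_of_lt_of_le one_pos hZ1
  have hx : |x| ≤ Z := by
    have := abs_nonneg y; have := abs_nonneg z; simp only [hZdef]; linarith
  have hy : |y| ≤ Z := by
    have := abs_nonneg x; have := abs_nonneg z; simp only [hZdef]; linarith
  have hz : |z| ≤ Z := by
    have := abs_nonneg x; have := abs_nonneg y; simp only [hZdef]; linarith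
  have h1 : (|x| ^ r) ^ 2 ≤ (Z ^ r) ^ 2 :=
    pow_le_pow_left₀ (Real.rpow_nonneg (abs_nonneg x) r)
      (Real.rpow_le_rpow (abs_nonneg x) hx hr) 2
  have h2 : (|y| ^ l - |z| ^ l) ^ 2 ≤ (max l 1 * Z ^ (l - s) * |y - z| ^ s) ^ 2 := by
    rw [← sq_abs (|y| ^ l - |z| ^ l)]
    exact pow_le_pow_left₀ (abs_nonneg _) (aux_abs_rpow_sub hs0 hsl hs1 hZ1 y z hy hz) 2
  have e1 : (Z ^ r) ^ 2 = Z ^ (2 * r) := by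
    rw [← Real.rpow_natCast (Z ^ r) 2, ← Real.rpow_mul hZ0.le]
    norm_num [mul_comm]
  have e2 : (Z ^ (l - s)) ^ 2 = Z ^ (2 * (l - s)) := by
    rw [← Real.rpow_natCast (Z ^ (l - s)) 2, ← Real.rpow_mul hZ0.le]
    norm_num [mul_comm]
  have e3 : (|y - z| ^ s) ^ 2 = ((y - z) ^ 2) ^ s := by
    rw [← sq_abs (y - z), ← Real.rpow_natCast (|y - z|) 2,
      ← Real.rpow_natCast (|y - z| ^ s) 2, ← Real.rpow_mul (abs_nonneg _),
      ← Real.rpow_mul (abs_nonneg _)]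
    norm_num [mul_comm]
  have e4 : Z ^ (2 * r) * Z ^ (2 * (l - s)) = Z ^ (2 * (r + l) - 2 * s) := by
    rw [← Real.rpow_add hZ0]; ring_nf
  calc (|x| ^ r) ^ 2 * (|y| ^ l - |z| ^ l) ^ 2
      ≤ (Z ^ r) ^ 2 * (max l 1 * Z ^ (l - s) * |y - z| ^ s) ^ 2 :=
        mul_le_mul h1 h2 (sq_nonneg _) (sq_nonneg _)
    _ = (max l 1) ^ 2 * (Z ^ (2 * r) * Z ^ (2 * (l - s))) * ((y - z) ^ 2) ^ s := by
        rw [mul_pow, mul_pow, e1, e2, e3]; ring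
    _ = (max l 1) ^ 2 * Z ^ (2 * (r + l) - 2 * s) * ((y - z) ^ 2) ^ s := by rw [e4]
open scoped ENNReal
open MeasureTheory ProbabilityTheory in
private lemma aux_key {Ω : Type*} [MeasureSpace Ω]
    {r l s Q C : ℝ} (hr : 0 ≤ r) (hs0 : 0 < s) (hs1 : s < 1) (hsl : s ≤ l)
    (hQ : Q = (2 * (r + l) - 2 * s) / (1 - s))
    {X Y W : Ω → ℝ} (hX : Measurable X) (hY : Measurable Y) (hW : Measurable W)
    (hC : ∫⁻ ω, ENNReal.ofReal ((1 + |X ω| + |Y ω| + |W ω|) ^ Q) ∂ℙ ≤ ENNReal.ofReal C) :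
    ∫⁻ ω, ENNReal.ofReal ((|X ω| ^ r) ^ 2 * (|Y ω| ^ l - |W ω| ^ l) ^ 2) ∂ℙ ≤
      ENNReal.ofReal ((max l 1) ^ 2) * (ENNReal.ofReal C) ^ (1 - s) *
        (∫⁻ ω, ENNReal.ofReal ((Y ω - W ω) ^ 2) ∂ℙ) ^ s := by
  have h1s : 0 < 1 - s := by linarith
  have hZnn : ∀ ω, (0:ℝ) ≤ 1 + |X ω| + |Y ω| + |W ω| := by
    intro ω
    have := abs_nonneg (X ω); have := abs_nonneg (Y ω); have := abs_nonneg (W ω)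
    linarith
  set F : Ω → ℝ≥0∞ := fun ω =>
    ENNReal.ofReal ((1 + |X ω| + |Y ω| + |W ω|) ^ (2 * (r + l) - 2 * s)) with hFdef
  set G : Ω → ℝ≥0∞ := fun ω => ENNReal.ofReal (((Y ω - W ω) ^ 2) ^ s) with hGdef
  have hZmeas : Measurable fun ω => 1 + |X ω| + |Y ω| + |W ω| :=
    ((measurable_const.add hX.abs).add hY.abs).add hW.abs
  have hA0 : (0:ℝ) ≤ 2 * (r + l) - 2 * s := by linarith
  have hF : Measurable F :=
    ((Real.continuous_rpow_const hA0).measurable.comp hZmeas).ennreal_ofReal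
  have hG : Measurable G :=
    ((Real.continuous_rpow_const hs0.le).measurable.comp
      ((hY.sub hW).pow_const 2)).ennreal_ofReal
  have hp : Real.HolderConjugate (1 - s)⁻¹ s⁻¹ := by
    rw [Real.holderConjugate_iff]
    constructor
    · rw [one_lt_inv_iff₀]; exact ⟨h1s, by linarith⟩
    · rw [inv_inv, inv_inv]; ring
  have step1 : ∫⁻ ω, ENNReal.ofReal ((|X ω| ^ r) ^ 2 * (|Y ω| ^ l - |W ω| ^ l) ^ 2) ∂ℙ ≤
      ENNReal.ofReal ((max l 1) ^ 2) * ∫⁻ ω, F ω * G ω ∂ℙ := by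
    rw [← lintegral_const_mul _ (f := fun ω => F ω * G ω) (hF.mul hG)]
    apply lintegral_mono
    intro ω
    have hpt := aux_pointwise (x := X ω) (y := Y ω) (z := W ω) hr hs0 hsl hs1.le
    rw [mul_assoc] at hpt
    calc ENNReal.ofReal ((|X ω| ^ r) ^ 2 * (|Y ω| ^ l - |W ω| ^ l) ^ 2)
        ≤ ENNReal.ofReal ((max l 1) ^ 2 *
            ((1 + |X ω| + |Y ω| + |W ω|) ^ (2 * (r + l) - 2 * s) * ((Y ω - W ω) ^ 2) ^ s)) :=
          ENNReal.ofReal_le_ofReal hpt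
      _ = ENNReal.ofReal ((max l 1) ^ 2) * (F ω * G ω) := by
          rw [ENNReal.ofReal_mul (by positivity),
            ENNReal.ofReal_mul (Real.rpow_nonneg (hZnn ω) _)]
  have step2 : ∫⁻ ω, F ω * G ω ∂ℙ ≤
      (∫⁻ ω, F ω ^ (1 - s)⁻¹ ∂ℙ) ^ (1 / (1 - s)⁻¹) *
        (∫⁻ ω, G ω ^ s⁻¹ ∂ℙ) ^ (1 / s⁻¹) :=
    ENNReal.lintegral_mul_le_Lp_mul_Lq ℙ hp hF.aemeasurable hG.aemeasurable
  have e5 : ∀ ω, F ω ^ (1 - s)⁻¹ =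
      ENNReal.ofReal ((1 + |X ω| + |Y ω| + |W ω|) ^ Q) := by
    intro ω
    rw [hFdef, ENNReal.ofReal_rpow_of_nonneg (Real.rpow_nonneg (hZnn ω) _) (by positivity),
      ← Real.rpow_mul (hZnn ω)]
    congr 1
    rw [hQ, div_eq_mul_inv]
  have e6 : ∀ ω, G ω ^ s⁻¹ = ENNReal.ofReal ((Y ω - W ω) ^ 2) := by
    intro ω
    rw [hGdef, ENNReal.ofReal_rpow_of_nonneg (Real.rpow_nonneg (sq_nonneg _) _) (by positivity),
      ← Real.rpow_mul (sq_nonneg _), mul_inv_cancel₀ hs0.ne', Real.rpow_one]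
  have hFbound : (∫⁻ ω, F ω ^ (1 - s)⁻¹ ∂ℙ) ^ (1 / (1 - s)⁻¹) ≤
      (ENNReal.ofReal C) ^ (1 - s) := by
    rw [one_div, inv_inv]
    apply ENNReal.rpow_le_rpow _ h1s.le
    rw [lintegral_congr e5]
    exact hC
  have hGeq : (∫⁻ ω, G ω ^ s⁻¹ ∂ℙ) ^ (1 / s⁻¹) =
      (∫⁻ ω, ENNReal.ofReal ((Y ω - W ω) ^ 2) ∂ℙ) ^ s := by
    rw [one_div, inv_inv, lintegral_congr e6]
  calc ∫⁻ ω, ENNReal.ofReal ((|X ω| ^ r) ^ 2 * (|Y ω| ^ l - |W ω| ^ l) ^ 2) ∂ℙ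
      ≤ ENNReal.ofReal ((max l 1) ^ 2) * ∫⁻ ω, F ω * G ω ∂ℙ := step1
    _ ≤ ENNReal.ofReal ((max l 1) ^ 2) *
        ((∫⁻ ω, F ω ^ (1 - s)⁻¹ ∂ℙ) ^ (1 / (1 - s)⁻¹) * (∫⁻ ω, G ω ^ s⁻¹ ∂ℙ) ^ (1 / s⁻¹)) :=
        mul_le_mul_right step2 _
    _ ≤ ENNReal.ofReal ((max l 1) ^ 2) *
        ((ENNReal.ofReal C) ^ (1 - s) *
          (∫⁻ ω, ENNReal.ofReal ((Y ω - W ω) ^ 2) ∂ℙ) ^ s) := by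
        rw [hGeq] at *
        exact mul_le_mul_right (mul_le_mul_left hFbound _) _
    _ = ENNReal.ofReal ((max l 1) ^ 2) * (ENNReal.ofReal C) ^ (1 - s) *
        (∫⁻ ω, ENNReal.ofReal ((Y ω - W ω) ^ 2) ∂ℙ) ^ s := by ring
private lemma aux_avg_rpow {s : ℝ} (hs0 : 0 < s) (hs1 : s < 1) (N : ℕ) (V : ℕ → ℝ≥0∞) :
    (N : ℝ≥0∞)⁻¹ * ∑ m ∈ Finset.Icc 1 N, V m ^ s ≤
      ((N : ℝ≥0∞)⁻¹ * ∑ m ∈ Finset.Icc 1 N, V m) ^ s := by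
  rcases Nat.eq_zero_or_pos N with rfl | hN
  · rw [show Finset.Icc 1 0 = (∅ : Finset ℕ) from Finset.Icc_eq_empty (by norm_num)]
    simp [ENNReal.zero_rpow_of_pos hs0]
  · have hN0 : (N : ℝ≥0∞) ≠ 0 := Nat.cast_ne_zero.2 hN.ne'
    have hNtop : (N : ℝ≥0∞) ≠ ⊤ := ENNReal.natCast_ne_top N
    have hp : Real.HolderConjugate s⁻¹ (1 - s)⁻¹ := by
      rw [Real.holderConjugate_iff]
      constructor
      · rw [one_lt_inv_iff₀]; exact ⟨hs0, hs1⟩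
      · rw [inv_inv, inv_inv]; ring
    have h := ENNReal.inner_le_Lp_mul_Lq (Finset.Icc 1 N) (fun m => V m ^ s)
      (fun _ => 1) hp
    simp only [mul_one, ENNReal.one_rpow, one_div, inv_inv] at h
    have hVs : ∀ m, (V m ^ s) ^ s⁻¹ = V m := by
      intro m
      rw [← ENNReal.rpow_mul, mul_inv_cancel₀ hs0.ne', ENNReal.rpow_one]
    simp only [hVs, Finset.sum_const, Nat.card_Icc, add_tsub_cancel_right, nsmul_eq_mul, smul_eq_mul,
      mul_one] at h
    -- h : ∑ V^s ≤ (∑ V)^s * N^(1-s)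
    have e : (N : ℝ≥0∞)⁻¹ * (N : ℝ≥0∞) ^ (1 - s) = ((N : ℝ≥0∞)⁻¹) ^ s := by
      rw [← ENNReal.rpow_neg_one (N : ℝ≥0∞), ← ENNReal.rpow_add _ _ hN0 hNtop,
        ← ENNReal.rpow_mul]
      congr 1; ring
    calc (N : ℝ≥0∞)⁻¹ * ∑ m ∈ Finset.Icc 1 N, V m ^ s
        ≤ (N : ℝ≥0∞)⁻¹ * ((∑ m ∈ Finset.Icc 1 N, V m) ^ s * (N : ℝ≥0∞) ^ (1 - s)) :=
          mul_le_mul_right h _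
      _ = ((N : ℝ≥0∞)⁻¹ * (N : ℝ≥0∞) ^ (1 - s)) * (∑ m ∈ Finset.Icc 1 N, V m) ^ s := by
          ring
      _ = ((N : ℝ≥0∞)⁻¹) ^ s * (∑ m ∈ Finset.Icc 1 N, V m) ^ s := by rw [e]
      _ = ((N : ℝ≥0∞)⁻¹ * ∑ m ∈ Finset.Icc 1 N, V m) ^ s :=
          (ENNReal.mul_rpow_of_nonneg _ _ hs0.le).symm
/-- **Lemma 2 of Podolskij–Vetter (2009).**
If the triangular arrays `μ, μ', μ''` have moments of all orders `q < 2(r+l)+ε`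
bounded uniformly, and the averaged second moments of `μ' - μ''` tend to zero,
then the averaged expectations `E[f²(μₘ)(g(μ'ₘ) - g(μ''ₘ))²]` with
`f(x) = |x|^r`, `g(x) = |x|^l` tend to zero as well. -/
theorem modulated_bipower_approximation_lemma
    {Ω : Type*} [MeasureSpace Ω] [IsProbabilityMeasure (ℙ : Measure Ω)]
    (r l : ℝ) (hr : 0 ≤ r) (hl : 0 ≤ l)
    (M : ℕ → ℕ) (hM : Tendsto M atTop atTop)
    (μ μ' μ'' : ℕ → ℕ → Ω → ℝ)
    (hμmeas : ∀ n m, Measurable (μ n m))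
    (hμ'meas : ∀ n m, Measurable (μ' n m))
    (hμ''meas : ∀ n m, Measurable (μ'' n m))
    (ε : ℝ) (hε : 0 < ε)
    (hmom : ∀ q : ℝ, 0 < q → q < 2 * (r + l) + ε → ∃ C : ℝ,
      ∀ n m, 1 ≤ m → m ≤ M n →
        ∫⁻ ω, ENNReal.ofReal
            ((1 + |μ n m ω| + |μ' n m ω| + |μ'' n m ω|) ^ q) ∂ℙ
          ≤ ENNReal.ofReal C)
    (hdiff : Tendsto (fun n => (M n : ℝ≥0∞)⁻¹ *
        ∑ m ∈ Finset.Icc 1 (M n),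
          ∫⁻ ω, ENNReal.ofReal ((μ' n m ω - μ'' n m ω) ^ 2) ∂ℙ)
      atTop (nhds 0)) :
    Tendsto (fun n => (M n : ℝ≥0∞)⁻¹ *
        ∑ m ∈ Finset.Icc 1 (M n),
          ∫⁻ ω, ENNReal.ofReal
            ((|μ n m ω| ^ r) ^ 2 * (|μ' n m ω| ^ l - |μ'' n m ω| ^ l) ^ 2) ∂ℙ)
      atTop (nhds 0) := by
  rcases eq_or_lt_of_le hl with hl0 | hl0
  · -- trivial case l = 0
    subst hl0
    simp only [Real.rpow_zero, sub_self, ne_eq, OfNat.ofNat_ne_zero, not_false_eq_true,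
      zero_pow, mul_zero, ENNReal.ofReal_zero, lintegral_zero, Finset.sum_const_zero]
    exact tendsto_const_nhds
  · -- main case l > 0
    have hD : (0:ℝ) < 2 * (r + l) + ε := by linarith
    set s : ℝ := min l (min 1 (ε / (2 * (r + l) + ε))) / 2 with hs_def
    have hs0 : 0 < s := by
      apply div_pos _ two_pos
      exact lt_min hl0 (lt_min one_pos (div_pos hε hD))
    have hsl2 : s ≤ l / 2 := by
      apply div_le_div_of_nonneg_right ?_ (by norm_num)
      exact min_le_left _ _
    have hsl : s ≤ l := hsl2.trans (by linarith)
    have hs_half : s ≤ 1 / 2 := by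
      apply div_le_div_of_nonneg_right ?_ (by norm_num)
      exact (min_le_right _ _).trans (min_le_left _ _)
    have hs1 : s < 1 := by linarith
    have h1s : (0:ℝ) < 1 - s := by linarith
    have hsε : s * (2 * (r + l) + ε) ≤ ε / 2 := by
      have h1 : s ≤ (ε / (2 * (r + l) + ε)) / 2 := by
        apply div_le_div_of_nonneg_right ?_ (by norm_num)
        exact (min_le_right _ _).trans (min_le_right _ _)
      calc s * (2 * (r + l) + ε) ≤ (ε / (2 * (r + l) + ε)) / 2 * (2 * (r + l) + ε) :=
            mul_le_mul_of_nonneg_right h1 hD.le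
        _ = ε / 2 := by field_simp
    set Q : ℝ := (2 * (r + l) - 2 * s) / (1 - s) with hQ_def
    have hQ0 : 0 < Q := by
      apply div_pos _ h1s
      linarith
    have hQlt : Q < 2 * (r + l) + ε := by
      rw [hQ_def, div_lt_iff₀ h1s]
      nlinarith
    obtain ⟨C, hC⟩ := hmom Q hQ0 hQlt
    set K : ℝ≥0∞ := ENNReal.ofReal ((max l 1) ^ 2) * (ENNReal.ofReal C) ^ (1 - s) with hK_def
    have hKtop : K ≠ ⊤ :=
      ENNReal.mul_ne_top ENNReal.ofReal_ne_top
        (ENNReal.rpow_ne_top_of_nonneg h1s.le ENNReal.ofReal_ne_top)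
    have hbound : ∀ n, (M n : ℝ≥0∞)⁻¹ *
        ∑ m ∈ Finset.Icc 1 (M n),
          ∫⁻ ω, ENNReal.ofReal
            ((|μ n m ω| ^ r) ^ 2 * (|μ' n m ω| ^ l - |μ'' n m ω| ^ l) ^ 2) ∂ℙ ≤
        K * ((M n : ℝ≥0∞)⁻¹ *
          ∑ m ∈ Finset.Icc 1 (M n),
            ∫⁻ ω, ENNReal.ofReal ((μ' n m ω - μ'' n m ω) ^ 2) ∂ℙ) ^ s := by
      intro n
      calc (M n : ℝ≥0∞)⁻¹ * ∑ m ∈ Finset.Icc 1 (M n),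
            ∫⁻ ω, ENNReal.ofReal
              ((|μ n m ω| ^ r) ^ 2 * (|μ' n m ω| ^ l - |μ'' n m ω| ^ l) ^ 2) ∂ℙ
          ≤ (M n : ℝ≥0∞)⁻¹ * ∑ m ∈ Finset.Icc 1 (M n),
            K * (∫⁻ ω, ENNReal.ofReal ((μ' n m ω - μ'' n m ω) ^ 2) ∂ℙ) ^ s := by
            apply mul_le_mul_right
            apply Finset.sum_le_sum
            intro m hm
            obtain ⟨hm1, hm2⟩ := Finset.mem_Icc.1 hm
            exact aux_key hr hs0 hs1 hsl hQ_def (hμmeas n m) (hμ'meas n m) (hμ''meas n m)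
              (hC n m hm1 hm2)
        _ = K * ((M n : ℝ≥0∞)⁻¹ * ∑ m ∈ Finset.Icc 1 (M n),
            (∫⁻ ω, ENNReal.ofReal ((μ' n m ω - μ'' n m ω) ^ 2) ∂ℙ) ^ s) := by
            rw [← Finset.mul_sum]; ring
        _ ≤ K * ((M n : ℝ≥0∞)⁻¹ *
            ∑ m ∈ Finset.Icc 1 (M n),
              ∫⁻ ω, ENNReal.ofReal ((μ' n m ω - μ'' n m ω) ^ 2) ∂ℙ) ^ s :=
            mul_le_mul_right (aux_avg_rpow hs0 hs1 (M n) _) _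
    have hlim : Tendsto (fun n => K * ((M n : ℝ≥0∞)⁻¹ *
        ∑ m ∈ Finset.Icc 1 (M n),
          ∫⁻ ω, ENNReal.ofReal ((μ' n m ω - μ'' n m ω) ^ 2) ∂ℙ) ^ s)
        atTop (nhds 0) := by
      have h1 : Tendsto (fun n => ((M n : ℝ≥0∞)⁻¹ *
          ∑ m ∈ Finset.Icc 1 (M n),
            ∫⁻ ω, ENNReal.ofReal ((μ' n m ω - μ'' n m ω) ^ 2) ∂ℙ) ^ s)
          atTop (nhds 0) := by
        have hc := (ENNReal.continuous_rpow_const (y := s)).tendsto 0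
        rw [ENNReal.zero_rpow_of_pos hs0] at hc
        exact hc.comp hdiff
      have h2 := ENNReal.Tendsto.const_mul h1 (Or.inr hKtop)
      rwa [mul_zero] at h2
    exact tendsto_of_tendsto_of_tendsto_of_le_of_le tendsto_const_nhds hlim
      (fun n => zero_le) hbound
end

section
/- With K_n = ⌈c₁√n⌉ and N_n = ⌈c₁c₂√n⌉ for constants c₁ > 0 and c₂ > 1, the deterministic limit lim_{n→∞} (1/(√n (N_n − K_n + 1)²)) Σ_{i=0}^{N_n − K_n} Σ_{j=0}^{N_n − K_n} max(K_n − |i − j|, 0) = ν₁ holds, where ν₁ = c₁(3c₂ − 4 + max((2 − c₂)³, 0))/(3(c₂ − 1)²). -/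
open Filter Finset

/-- `K_n = ⌈c₁ √n⌉`. -/
noncomputable def Kn (c₁ : ℝ) (n : ℕ) : ℕ := ⌈c₁ * Real.sqrt n⌉₊

/-- `N_n = ⌈c₁ c₂ √n⌉`. -/
noncomputable def Nn (c₁ c₂ : ℝ) (n : ℕ) : ℕ := ⌈c₁ * c₂ * Real.sqrt n⌉₊

/-- `ν₁ = c₁ (3c₂ - 4 + max((2 - c₂)³, 0)) / (3(c₂ - 1)²)`. -/
noncomputable def nu₁ (c₁ c₂ : ℝ) : ℝ :=
  c₁ * (3 * c₂ - 4 + max ((2 - c₂) ^ 3) 0) / (3 * (c₂ - 1) ^ 2)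

lemma abs_cast_sub_eq_dist (i j : ℕ) : |(i:ℝ) - (j:ℝ)| = (Nat.dist i j : ℝ) := by
  rcases le_total i j with h | h
  · rw [Nat.dist_eq_sub_of_le h, Nat.cast_sub h, abs_sub_comm, abs_of_nonneg]
    have : (i:ℝ) ≤ j := by exact_mod_cast h
    linarith
  · rw [Nat.dist_eq_sub_of_le_right h, Nat.cast_sub h, abs_of_nonneg]
    have : (j:ℝ) ≤ i := by exact_mod_cast h
    linarith

lemma sum_cast_range (n : ℕ) : ∑ d ∈ range n, (d:ℝ) = n * (n - 1) / 2 := by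
  induction n with
  | zero => simp
  | succ k ih => rw [sum_range_succ, ih]; push_cast; ring

lemma sum_cast_sq_range (n : ℕ) :
    ∑ d ∈ range n, (d:ℝ)^2 = n * (n - 1) * (2 * n - 1) / 6 := by
  induction n with
  | zero => simp
  | succ k ih => rw [sum_range_succ, ih]; push_cast; ring

lemma double_sum_dist (F : ℕ → ℝ) (m : ℕ) :
    ∑ i ∈ range m, ∑ j ∈ range m, F (Nat.dist i j)
      = m * F 0 + 2 * ∑ d ∈ Ico 1 m, ((m:ℝ) - d) * F d := by
  induction m with
  | zero => simp
  | succ k ih =>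
    rcases Nat.eq_zero_or_pos k with hk0 | hk0
    · subst hk0; simp [Nat.dist_self]
    have hrefl : ∑ j ∈ range k, F (k - j) = ∑ j ∈ range k, F (j + 1) := by
      rw [← sum_range_reflect (fun j => F (j + 1)) k]
      refine sum_congr rfl fun j hj => ?_
      have hj' : j < k := mem_range.mp hj
      congr 1
      omega
    have hIco : ∑ j ∈ range k, F (j + 1) = ∑ d ∈ Ico 1 (k + 1), F d := by
      rw [sum_Ico_eq_sum_range]
      simp [add_comm]
    have hIco2 : ∑ d ∈ Ico 1 (k + 1), F d = (∑ d ∈ Ico 1 k, F d) + F k :=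
      sum_Ico_succ_top hk0 _
    have hdistk : ∀ j ∈ range k, F (Nat.dist k j) = F (k - j) := by
      intro j hj; rw [Nat.dist_eq_sub_of_le_right (le_of_lt (mem_range.mp hj))]
    have hdistk' : ∀ i ∈ range k, F (Nat.dist i k) = F (k - i) := by
      intro i hi; rw [Nat.dist_eq_sub_of_le (le_of_lt (mem_range.mp hi))]
    rw [sum_range_succ]
    simp only [sum_range_succ]
    rw [sum_add_distrib, ih, sum_congr rfl hdistk', sum_congr rfl hdistk, hrefl,
      hIco, hIco2, Nat.dist_self]
    have hsplit : ∑ d ∈ Ico 1 (k + 1), (((k+1:ℕ):ℝ) - d) * F d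
        = (∑ d ∈ Ico 1 k, ((k:ℝ) - d) * F d) + ((∑ d ∈ Ico 1 k, F d) + F k) := by
      rw [sum_Ico_succ_top hk0]
      have h1 : ∀ d ∈ Ico 1 k, (((k+1:ℕ):ℝ) - d) * F d = ((k:ℝ) - d) * F d + F d := by
        intro d hd; push_cast; ring
      rw [sum_congr rfl h1, sum_add_distrib]
      push_cast
      ring
    rw [hsplit]
    push_cast
    ring

lemma exact_sum (K m : ℕ) (hK : 1 ≤ K) (hm : 1 ≤ m) :
    ∑ i ∈ range m, ∑ j ∈ range m, max ((K:ℝ) - |(i:ℝ) - (j:ℝ)|) 0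
      = 2 * ((min m K : ℕ):ℝ) * m * K - m * K
        - ((m:ℝ) + K) * (((min m K : ℕ):ℝ) * (((min m K : ℕ):ℝ) - 1))
        + ((min m K : ℕ):ℝ) * (((min m K : ℕ):ℝ) - 1) * (2 * ((min m K : ℕ):ℝ) - 1) / 3 := by
  set P : ℕ := min m K with hP
  have hP1 : 1 ≤ P := le_min hm hK
  have hstep : ∑ i ∈ range m, ∑ j ∈ range m, max ((K:ℝ) - |(i:ℝ) - (j:ℝ)|) 0
      = ∑ i ∈ range m, ∑ j ∈ range m, (fun d : ℕ => max ((K:ℝ) - (d:ℝ)) 0) (Nat.dist i j) := by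
    refine sum_congr rfl fun i _ => sum_congr rfl fun j _ => ?_
    rw [abs_cast_sub_eq_dist]
  rw [hstep, double_sum_dist (fun d : ℕ => max ((K:ℝ) - (d:ℝ)) 0) m]
  simp only [Nat.cast_zero, sub_zero]
  rw [max_eq_left (le_of_lt (by positivity : (0:ℝ) < (K:ℝ)))]
  have hsub : ∑ d ∈ Ico 1 m, ((m:ℝ) - d) * (max ((K:ℝ) - (d:ℝ)) 0)
      = ∑ d ∈ Ico 1 P, ((m:ℝ) - d) * ((K:ℝ) - d) := by
    rw [← sum_subset (Ico_subset_Ico le_rfl (min_le_left m K))]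
    · refine sum_congr rfl fun d hd => ?_
      have hd' := mem_Ico.mp hd
      have hdK : d < K := lt_of_lt_of_le hd'.2 (min_le_right m K)
      have hle : (d:ℝ) ≤ (K:ℝ) := by exact_mod_cast hdK.le
      rw [max_eq_left (by linarith)]
    · intro d hd hnd
      have hd' := mem_Ico.mp hd
      have hPd : P ≤ d := by
        by_contra hlt
        exact hnd (mem_Ico.mpr ⟨hd'.1, lt_of_not_ge hlt⟩)
      have hKd : K ≤ d := by omega
      have hle : (K:ℝ) ≤ (d:ℝ) := by exact_mod_cast hKd
      rw [max_eq_right (by linarith), mul_zero]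
  rw [hsub]
  have hrange : ∑ d ∈ range P, ((m:ℝ) - d) * ((K:ℝ) - d)
      = (m:ℝ) * K + ∑ d ∈ Ico 1 P, ((m:ℝ) - d) * ((K:ℝ) - d) := by
    rw [range_eq_Ico, sum_eq_sum_Ico_succ_bot hP1]
    norm_num
  have hexp : ∑ d ∈ range P, ((m:ℝ) - d) * ((K:ℝ) - d)
      = (P:ℝ) * ((m:ℝ) * K) - ((m:ℝ) + K) * ((P:ℝ) * ((P:ℝ) - 1) / 2)
        + (P:ℝ) * ((P:ℝ) - 1) * (2 * (P:ℝ) - 1) / 6 := by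
    have h1 : ∀ d ∈ range P, ((m:ℝ) - d) * ((K:ℝ) - d)
        = (m:ℝ) * K - ((m:ℝ) + K) * d + (d:ℝ)^2 := by
      intro d _; ring
    rw [sum_congr rfl h1]
    rw [sum_add_distrib, sum_sub_distrib, sum_const, ← mul_sum, sum_cast_range,
      sum_cast_sq_range, card_range]
    push_cast
    ring
  have hval : ∑ d ∈ Ico 1 P, ((m:ℝ) - d) * ((K:ℝ) - d)
      = (P:ℝ) * ((m:ℝ) * K) - ((m:ℝ) + K) * ((P:ℝ) * ((P:ℝ) - 1) / 2)
        + (P:ℝ) * ((P:ℝ) - 1) * (2 * (P:ℝ) - 1) / 6 - (m:ℝ) * K := by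
    linarith [hrange, hexp]
  rw [hval]
  ring

/-- `⌈c √n⌉ / √n → c` for `c > 0`. -/
lemma ceil_div_sqrt_tendsto (c : ℝ) (hc : 0 < c) :
    Tendsto (fun n : ℕ => (⌈c * Real.sqrt n⌉₊ : ℝ) / Real.sqrt n) atTop (nhds c) := by
  have hsqrt_inv : Tendsto (fun n : ℕ => (Real.sqrt n)⁻¹) atTop (nhds 0) := by
    have h1 : Tendsto (fun n : ℕ => ((n:ℝ))⁻¹) atTop (nhds 0) :=
      tendsto_inv_atTop_nhds_zero_nat
    have h2 : Tendsto (fun n : ℕ => Real.sqrt ((n:ℝ)⁻¹)) atTop (nhds 0) := by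
      have h3 := (Real.continuous_sqrt.tendsto 0).comp h1
      simpa [Function.comp_def] using h3
    refine h2.congr fun n => ?_
    rw [Real.sqrt_inv]
  have hupper : Tendsto (fun n : ℕ => c + (Real.sqrt n)⁻¹) atTop (nhds c) := by
    have h4 := Tendsto.add
      (tendsto_const_nhds : Tendsto (fun _ : ℕ => c) atTop (nhds c)) hsqrt_inv
    simpa using h4
  refine tendsto_of_tendsto_of_tendsto_of_le_of_le' tendsto_const_nhds hupper ?_ ?_
  · filter_upwards [eventually_ge_atTop 1] with n hn
    have hs : 0 < Real.sqrt n := Real.sqrt_pos.mpr (by exact_mod_cast Nat.pos_of_ne_zero (by omega))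
    rw [le_div_iff₀ hs]
    exact Nat.le_ceil _
  · filter_upwards [eventually_ge_atTop 1] with n hn
    have hs : 0 < Real.sqrt n := Real.sqrt_pos.mpr (by exact_mod_cast Nat.pos_of_ne_zero (by omega))
    rw [div_le_iff₀ hs]
    have h1 : (⌈c * Real.sqrt n⌉₊ : ℝ) < c * Real.sqrt n + 1 :=
      Nat.ceil_lt_add_one (by positivity)
    have h2 : (c + (Real.sqrt n)⁻¹) * Real.sqrt n = c * Real.sqrt n + 1 := by
      field_simp
    linarith

lemma sqrt_inv_tendsto : Tendsto (fun n : ℕ => (Real.sqrt n)⁻¹) atTop (nhds 0) := by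
  have h1 : Tendsto (fun n : ℕ => ((n:ℝ))⁻¹) atTop (nhds 0) :=
    tendsto_inv_atTop_nhds_zero_nat
  have h2 : Tendsto (fun n : ℕ => Real.sqrt ((n:ℝ)⁻¹)) atTop (nhds 0) := by
    have h3 := (Real.continuous_sqrt.tendsto 0).comp h1
    simpa [Function.comp_def] using h3
  refine h2.congr fun n => ?_
  rw [Real.sqrt_inv]

/-- The deterministic limit
`(1/(√n (N_n - K_n + 1)²)) ∑_{i,j=0}^{N_n - K_n} max(K_n - |i - j|, 0) → ν₁`. -/
theorem double_sum_covariance_tendsto_nu₁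
    (c₁ c₂ : ℝ) (hc₁ : 0 < c₁) (hc₂ : 1 < c₂) :
    Tendsto (fun n : ℕ =>
        (Real.sqrt n * ((Nn c₁ c₂ n - Kn c₁ n + 1 : ℕ) : ℝ) ^ 2)⁻¹ *
          ∑ i ∈ Finset.range (Nn c₁ c₂ n - Kn c₁ n + 1),
            ∑ j ∈ Finset.range (Nn c₁ c₂ n - Kn c₁ n + 1),
              max ((Kn c₁ n : ℝ) - |(i : ℝ) - (j : ℝ)|) 0)
      atTop (nhds (nu₁ c₁ c₂)) := by
  set a : ℝ := c₁ with ha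
  set b : ℝ := c₁ * (c₂ - 1) with hb
  have hbpos : 0 < b := by rw [hb]; nlinarith
  set p : ℝ := min b a with hp
  set M : ℕ → ℕ := fun n => Nn c₁ c₂ n - Kn c₁ n + 1 with hM
  set Pf : ℕ → ℕ := fun n => min (M n) (Kn c₁ n) with hPf
  set α : ℕ → ℝ := fun n => (Kn c₁ n : ℝ) / Real.sqrt n with hαdef
  set β : ℕ → ℝ := fun n => (M n : ℝ) / Real.sqrt n with hβdef
  set π : ℕ → ℝ := fun n => (Pf n : ℝ) / Real.sqrt n with hπdef
  set e : ℕ → ℝ := fun n => (Real.sqrt n)⁻¹ with hedef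
  have hKleN : ∀ n, Kn c₁ n ≤ Nn c₁ c₂ n := by
    intro n
    exact Nat.ceil_mono (by nlinarith [Real.sqrt_nonneg (n:ℝ)])
  have hα : Tendsto α atTop (nhds a) := ceil_div_sqrt_tendsto c₁ hc₁
  have hN : Tendsto (fun n : ℕ => (Nn c₁ c₂ n : ℝ) / Real.sqrt n) atTop (nhds (c₁ * c₂)) :=
    ceil_div_sqrt_tendsto (c₁ * c₂) (by nlinarith)
  have he : Tendsto e atTop (nhds 0) := sqrt_inv_tendsto
  have hβ : Tendsto β atTop (nhds b) := by
    have h1 : Tendsto (fun n : ℕ => (Nn c₁ c₂ n : ℝ) / Real.sqrt n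
        - (Kn c₁ n : ℝ) / Real.sqrt n + (Real.sqrt n)⁻¹) atTop (nhds (c₁ * c₂ - c₁ + 0)) :=
      (hN.sub hα).add he
    have h2 : b = c₁ * c₂ - c₁ + 0 := by rw [hb]; ring
    rw [h2]
    refine h1.congr fun n => ?_
    show _ = (M n : ℝ) / Real.sqrt n
    rw [hM]
    simp only []
    rw [Nat.cast_add, Nat.cast_sub (hKleN n), Nat.cast_one]
    ring
  have hπ : Tendsto π atTop (nhds p) := by
    have h1 : Tendsto (fun n : ℕ => min (β n) (α n)) atTop (nhds p) := hβ.min hα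
    refine h1.congr fun n => ?_
    show min (β n) (α n) = (Pf n : ℝ) / Real.sqrt n
    rw [hβdef, hαdef, hPf]
    simp only []
    rw [min_div_div_right (Real.sqrt_nonneg n), Nat.cast_min]
  -- the limit of the algebraic expression
  have hnum : Tendsto (fun n : ℕ =>
      2 * π n * α n * β n - α n * β n * e n - (α n + β n) * (π n * (π n - e n))
        + π n * (π n - e n) * (2 * π n - e n) / 3) atTop
      (nhds (2 * p * a * b - a * b * 0 - (a + b) * (p * (p - 0))
        + p * (p - 0) * (2 * p - 0) / 3)) := by
    exact ((((((tendsto_const_nhds.mul hπ).mul hα).mul hβ).sub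
      ((hα.mul hβ).mul he)).sub
      ((hα.add hβ).mul (hπ.mul (hπ.sub he)))).add
      (((hπ.mul (hπ.sub he)).mul ((tendsto_const_nhds.mul hπ).sub he)).div_const 3))
  have hfull : Tendsto (fun n : ℕ =>
      (2 * π n * α n * β n - α n * β n * e n - (α n + β n) * (π n * (π n - e n))
        + π n * (π n - e n) * (2 * π n - e n) / 3) / (β n) ^ 2) atTop
      (nhds ((2 * p * a * b - a * b * 0 - (a + b) * (p * (p - 0))
        + p * (p - 0) * (2 * p - 0) / 3) / b ^ 2)) :=
    hnum.div (hβ.pow 2) (by positivity)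
  -- the limit value equals ν₁
  have hval : (2 * p * a * b - a * b * 0 - (a + b) * (p * (p - 0))
      + p * (p - 0) * (2 * p - 0) / 3) / b ^ 2 = nu₁ c₁ c₂ := by
    have hc21 : (c₂ - 1) ≠ 0 := by linarith
    have hc1ne : c₁ ≠ 0 := ne_of_gt hc₁
    rcases le_total c₂ 2 with h2 | h2
    · have hba : b ≤ a := by rw [hb, ha]; nlinarith
      have hpmin : p = b := min_eq_left hba
      have hmax : max ((2 - c₂) ^ 3) 0 = (2 - c₂) ^ 3 := by
        apply max_eq_left
        have : 0 ≤ 2 - c₂ := by linarith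
        positivity
      rw [hpmin, nu₁, hmax, hb, ha]
      field_simp
      ring
    · have hab : a ≤ b := by rw [hb, ha]; nlinarith
      have hpmin : p = a := min_eq_right hab
      have hmax : max ((2 - c₂) ^ 3) 0 = 0 := by
        apply max_eq_right
        have h1 : 2 - c₂ ≤ 0 := by linarith
        nlinarith [sq_nonneg (2 - c₂)]
      rw [hpmin, nu₁, hmax, hb, ha]
      field_simp
      ring
  rw [← hval]
  refine hfull.congr' ?_
  filter_upwards [eventually_ge_atTop 1] with n hn
  have hs : 0 < Real.sqrt n :=
    Real.sqrt_pos.mpr (by exact_mod_cast Nat.pos_of_ne_zero (by omega))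
  have hK1 : 1 ≤ Kn c₁ n := Nat.one_le_ceil_iff.mpr (by positivity)
  have hm1 : 1 ≤ M n := Nat.le_add_left 1 _
  have hmpos : (0:ℝ) < (M n : ℝ) := by exact_mod_cast hm1
  have hexact := exact_sum (Kn c₁ n) (M n) hK1 hm1
  show _ = (Real.sqrt n * ((M n : ℕ) : ℝ) ^ 2)⁻¹ * _
  rw [hexact]
  rw [hαdef, hβdef, hπdef, hedef, hPf]
  simp only []
  have hPcast : ((min (M n) (Kn c₁ n) : ℕ) : ℝ) = min ((M n : ℕ) : ℝ) ((Kn c₁ n : ℕ) : ℝ) :=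
    Nat.cast_min _ _
  field_simp
  ring
end

section
/- For each n ∈ ℕ let X_{n,0}, …, X_{n,n} and U_{n,0}, …, U_{n,n} be real random variables on a common probability space such that (U_{n,i})_{0≤i≤n} are i.i.d. with E[U_{n,0}] = 0 and E[U_{n,0}²] = ω² (the common law not depending on n), and such that the sequence Q_n = Σ_{i=1}^{n} (X_{n,i} − X_{n,i−1})² is bounded in probability. Then the noise-variance estimator ω̂²_n = (1/(2n)) Σ_{i=1}^{n} ((X_{n,i} + U_{n,i}) − (X_{n,i−1} + U_{n,i−1}))² converges in probability to ω² as n → ∞. -/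
open MeasureTheory ProbabilityTheory Filter Topology

namespace NoiseVar

variable {Ω : Type*} [MeasureSpace Ω] [IsProbabilityMeasure (ℙ : Measure Ω)]

/-- Convergence in probability to a constant. -/
def ConvProb (f : ℕ → Ω → ℝ) (c : ℝ) : Prop :=
  ∀ δ : ℝ, 0 < δ → Tendsto (fun n => ℙ {ω | δ ≤ |f n ω - c|}) atTop (𝓝 0)

lemma tendsto_zero_of_forall {s : ℕ → Set Ω}
    (h : ∀ ε : ℝ, 0 < ε → ∃ N, ∀ n ≥ N, ℙ (s n) ≤ ENNReal.ofReal ε) :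
    Tendsto (fun n => ℙ (s n)) atTop (𝓝 0) := by
  rw [ENNReal.tendsto_atTop_zero]
  intro e he
  have hrt : min e 1 ≠ ⊤ := ne_top_of_le_ne_top (by simp) (min_le_right _ _)
  have hrpos : 0 < (min e 1).toReal :=
    ENNReal.toReal_pos (lt_min he zero_lt_one).ne' hrt
  obtain ⟨N, hN⟩ := h _ hrpos
  refine ⟨N, fun n hn => (hN n hn).trans ?_⟩
  rw [ENNReal.ofReal_toReal hrt]
  exact le_trans (min_le_left _ _) le_rfl

lemma convProb_of_forall {f : ℕ → Ω → ℝ} {c : ℝ}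
    (h : ∀ δ : ℝ, 0 < δ → ∀ ε : ℝ, 0 < ε → ∃ N, ∀ n ≥ N,
      ℙ {ω | δ ≤ |f n ω - c|} ≤ ENNReal.ofReal ε) :
    ConvProb f c :=
  fun δ hδ => tendsto_zero_of_forall (h δ hδ)

lemma ConvProb.eventually_le {f : ℕ → Ω → ℝ} {c : ℝ} (h : ConvProb f c)
    {δ : ℝ} (hδ : 0 < δ) {ε : ℝ} (hε : 0 < ε) :
    ∃ N, ∀ n ≥ N, ℙ {ω | δ ≤ |f n ω - c|} ≤ ENNReal.ofReal ε := by
  have := (ENNReal.tendsto_atTop_zero.1 (h δ hδ)) (ENNReal.ofReal ε)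
    (by simp [ENNReal.ofReal_pos, hε])
  exact this

lemma ConvProb.congr {f g : ℕ → Ω → ℝ} {c : ℝ} (h : ConvProb f c)
    (heq : ∀ᶠ n in atTop, ∀ ω, f n ω = g n ω) : ConvProb g c := by
  intro δ hδ
  refine (h δ hδ).congr' ?_
  filter_upwards [heq] with n hn
  congr 1
  ext ω
  simp [hn ω]

lemma ConvProb.add {f g : ℕ → Ω → ℝ} {a b : ℝ} (hf : ConvProb f a) (hg : ConvProb g b) :
    ConvProb (fun n ω => f n ω + g n ω) (a + b) := by
  intro δ hδ
  have hδ2 : 0 < δ / 2 := by linarith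
  have hb : ∀ n : ℕ, ℙ {ω | δ ≤ |f n ω + g n ω - (a + b)|}
      ≤ ℙ {ω | δ/2 ≤ |f n ω - a|} + ℙ {ω | δ/2 ≤ |g n ω - b|} := by
    intro n
    refine le_trans (measure_mono ?_) (measure_union_le _ _)
    intro ω hω
    simp only [Set.mem_setOf_eq, Set.mem_union] at hω ⊢
    by_contra hcon
    push_neg at hcon
    have h1 := hcon.1
    have h2 := hcon.2
    have : |f n ω + g n ω - (a + b)| ≤ |f n ω - a| + |g n ω - b| := by
      have := abs_add_le (f n ω - a) (g n ω - b)
      rwa [show f n ω - a + (g n ω - b) = f n ω + g n ω - (a + b) by ring] at this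
    linarith
  have hlim : Tendsto (fun n => ℙ {ω | δ/2 ≤ |f n ω - a|} + ℙ {ω | δ/2 ≤ |g n ω - b|})
      atTop (𝓝 0) := by
    simpa using (hf (δ/2) hδ2).add (hg (δ/2) hδ2)
  exact tendsto_of_tendsto_of_tendsto_of_le_of_le tendsto_const_nhds hlim
    (fun n => zero_le) hb

lemma ConvProb.neg {f : ℕ → Ω → ℝ} {a : ℝ} (hf : ConvProb f a) :
    ConvProb (fun n ω => -(f n ω)) (-a) := by
  intro δ hδ
  have : ∀ n, {ω | δ ≤ |-(f n ω) - (-a)|} = {ω | δ ≤ |f n ω - a|} := by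
    intro n; ext ω; rw [Set.mem_setOf_eq, Set.mem_setOf_eq, ← abs_neg]; ring_nf
  simpa only [this] using hf δ hδ

/-- Markov's inequality, `ENNReal.ofReal` form. -/
lemma markov {f : Ω → ℝ} (hnn : ∀ ω, 0 ≤ f ω) (hint : Integrable f ℙ)
    {a : ℝ} (ha : 0 < a) :
    ℙ {ω | a ≤ f ω} ≤ ENNReal.ofReal ((∫ ω, f ω ∂ℙ) / a) := by
  have h := mul_meas_ge_le_integral_of_nonneg (μ := ℙ)
    (Eventually.of_forall hnn) hint a
  have hne : ℙ {ω | a ≤ f ω} ≠ ⊤ := measure_ne_top _ _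
  have h2 : (ℙ {ω | a ≤ f ω}).toReal ≤ (∫ ω, f ω ∂ℙ) / a := by
    rw [le_div_iff₀ ha]; rw [measureReal_def] at h; linarith [h]
  calc ℙ {ω | a ≤ f ω} = ENNReal.ofReal (ℙ {ω | a ≤ f ω}).toReal :=
        (ENNReal.ofReal_toReal hne).symm
    _ ≤ ENNReal.ofReal ((∫ ω, f ω ∂ℙ) / a) := ENNReal.ofReal_le_ofReal h2

/-- Chebyshev-type inequality from a second moment. -/
lemma cheb {g : Ω → ℝ} (hint : Integrable (fun ω => g ω ^ 2) ℙ) {a : ℝ} (ha : 0 < a) :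
    ℙ {ω | a ≤ |g ω|} ≤ ENNReal.ofReal ((∫ ω, g ω ^ 2 ∂ℙ) / a ^ 2) := by
  have hset : {ω | a ≤ |g ω|} = {ω | a ^ 2 ≤ g ω ^ 2} := by
    ext ω
    simp only [Set.mem_setOf_eq, sq_le_sq, abs_of_pos ha, abs_abs]
  rw [hset]
  exact markov (fun ω => sq_nonneg _) hint (pow_pos ha 2)

lemma integrable_mul_of_memL2 {f g : Ω → ℝ} (hf : MemLp f 2 ℙ) (hg : MemLp g 2 ℙ) :
    Integrable (fun ω => f ω * g ω) ℙ := by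
  refine Integrable.mono' ((hf.integrable_sq.add hg.integrable_sq).div_const 2)
    (hf.aestronglyMeasurable.mul hg.aestronglyMeasurable) (Eventually.of_forall fun ω => ?_)
  have h := sq_nonneg (|f ω| - |g ω|)
  have h1 : ‖f ω * g ω‖ = |f ω| * |g ω| := by rw [Real.norm_eq_abs, abs_mul]
  rw [h1]
  simp only [Pi.add_apply]
  nlinarith [sq_abs (f ω), sq_abs (g ω)]

lemma integral_sq_sum (s : Finset ℕ) (g : ℕ → Ω → ℝ)
    (hL2 : ∀ i ∈ s, MemLp (g i) 2 ℙ)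
    (hortho : ∀ i ∈ s, ∀ j ∈ s, i ≠ j → ∫ ω, g i ω * g j ω ∂ℙ = 0) :
    Integrable (fun ω => (∑ i ∈ s, g i ω) ^ 2) ℙ ∧
      ∫ ω, (∑ i ∈ s, g i ω) ^ 2 ∂ℙ = ∑ i ∈ s, ∫ ω, (g i ω) ^ 2 ∂ℙ := by
  have hexp : (fun ω => (∑ i ∈ s, g i ω) ^ 2)
      = fun ω => ∑ i ∈ s, ∑ j ∈ s, g i ω * g j ω := by
    funext ω; rw [sq, Finset.sum_mul_sum]
  have hint : ∀ i ∈ s, ∀ j ∈ s, Integrable (fun ω => g i ω * g j ω) ℙ :=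
    fun i hi j hj => integrable_mul_of_memL2 (hL2 i hi) (hL2 j hj)
  constructor
  · rw [hexp]
    exact integrable_finset_sum _ fun i hi => integrable_finset_sum _ fun j hj => hint i hi j hj
  · rw [hexp, integral_finset_sum _ fun i hi =>
      integrable_finset_sum _ fun j hj => hint i hi j hj]
    refine Finset.sum_congr rfl fun i hi => ?_
    rw [integral_finset_sum _ fun j hj => hint i hi j hj,
      Finset.sum_eq_single_of_mem i hi fun j hj hji => hortho i hi j hj fun h => hji h.symm]
    congr 1
    funext ω
    rw [sq]

lemma sum_sq_diff (u : ℕ → ℝ) (n : ℕ) :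
    ∑ i ∈ Finset.range n, (u (i + 1) - u i) ^ 2
      = 2 * ∑ i ∈ Finset.range (n + 1), (u i) ^ 2 - (u 0) ^ 2 - (u n) ^ 2
        - 2 * ∑ i ∈ Finset.range n, u i * u (i + 1) := by
  induction n with
  | zero => simp [Finset.sum_range_succ]; ring
  | succ n ih =>
    rw [Finset.sum_range_succ, ih,
      Finset.sum_range_succ (f := fun i => u i ^ 2) (n := n + 1),
      Finset.sum_range_succ (f := fun i => u i * u (i + 1)) (n := n)]
    ring


set_option maxHeartbeats 2000000 in
/-- Weak law of large numbers for triangular arrays of nonnegative, row-wise pairwise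
independent, identically distributed integrable random variables. -/
lemma wlln {V : ℕ → ℕ → Ω → ℝ}
    (hmeas : ∀ n i, Measurable (V n i))
    (hnonneg : ∀ n i ω, 0 ≤ V n i ω)
    (hindep : ∀ n i j, i ≤ n → j ≤ n → i ≠ j → IndepFun (V n i) (V n j) ℙ)
    (hident : ∀ n i, i ≤ n → IdentDistrib (V n i) (V 0 0) ℙ ℙ)
    (hint : Integrable (V 0 0) ℙ) :
    ConvProb (fun n ω => (n : ℝ)⁻¹ * ∑ i ∈ Finset.range (n + 1), V n i ω)
      (∫ ω, V 0 0 ω ∂ℙ) := by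
  set m := ∫ ω, V 0 0 ω ∂ℙ with hm
  have hm0 : 0 ≤ m := integral_nonneg (fun ω => hnonneg 0 0 ω)
  refine convProb_of_forall fun δ hδ ε hε => ?_
  -- truncation level
  have hlim : Tendsto (fun k : ℕ => ∫ ω, min (V 0 0 ω) k ∂ℙ) atTop (𝓝 m) := by
    refine tendsto_integral_of_dominated_convergence (fun ω => V 0 0 ω) ?_ hint ?_ ?_
    · intro k; exact ((hmeas 0 0).min measurable_const).aestronglyMeasurable
    · intro k; refine Eventually.of_forall fun ω => ?_
      rw [Real.norm_eq_abs, abs_of_nonneg (le_min (hnonneg 0 0 ω) (Nat.cast_nonneg k))]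
      exact min_le_left _ _
    · refine Eventually.of_forall fun ω => ?_
      refine tendsto_atTop_of_eventually_const (i₀ := ⌈V 0 0 ω⌉₊) fun k hk => ?_
      exact min_eq_left ((Nat.le_ceil _).trans (Nat.cast_le.2 hk))
  set rb : ℝ := min (δ / 8) (ε * δ / 16) with hrb
  have hrbpos : 0 < rb := lt_min (by linarith) (by positivity)
  obtain ⟨M, hM⟩ := (Metric.tendsto_atTop.1 hlim) rb hrbpos
  set mM := ∫ ω, min (V 0 0 ω) M ∂ℙ with hmM
  have hdist := hM M le_rfl
  rw [Real.dist_eq] at hdist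
  have hWint : Integrable (fun ω => min (V 0 0 ω) M) ℙ := by
    refine hint.mono' ((hmeas 0 0).min measurable_const).aestronglyMeasurable
      (Eventually.of_forall fun ω => ?_)
    rw [Real.norm_eq_abs, abs_of_nonneg (le_min (hnonneg 0 0 ω) (Nat.cast_nonneg M))]
    exact min_le_left _ _
  have hmM_le : mM ≤ m := integral_mono hWint hint (fun ω => min_le_left _ _)
  have hmM_nonneg : 0 ≤ mM :=
    integral_nonneg fun ω => le_min (hnonneg 0 0 ω) (Nat.cast_nonneg M)
  set r := m - mM with hr
  have hr_nonneg : 0 ≤ r := sub_nonneg.2 hmM_le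
  have hr_lt : r < rb := by
    have : |mM - m| < rb := hdist
    rw [abs_sub_comm, abs_of_nonneg hr_nonneg] at this
    exact this
  -- row facts
  have hVint : ∀ n i, i ≤ n → Integrable (V n i) ℙ :=
    fun n i hi => (hident n i hi).symm.integrable_iff.1 hint
  have hVavg : ∀ n i, i ≤ n → ∫ ω, V n i ω ∂ℙ = m :=
    fun n i hi => (hident n i hi).integral_eq
  have hWid : ∀ n i, i ≤ n →
      IdentDistrib (fun ω => min (V n i ω) M) (fun ω => min (V 0 0 ω) M) ℙ ℙ :=
    fun n i hi => (hident n i hi).comp (measurable_id.min measurable_const)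
  have hWiint : ∀ n i, i ≤ n → Integrable (fun ω => min (V n i ω) M) ℙ :=
    fun n i hi => (hWid n i hi).symm.integrable_iff.1 hWint
  have hWiavg : ∀ n i, i ≤ n → ∫ ω, min (V n i ω) M ∂ℙ = mM :=
    fun n i hi => (hWid n i hi).integral_eq
  -- the bound constant for the truncated part
  set A : ℝ := ((M : ℝ) + m) ^ 2 with hA
  have hA0 : 0 ≤ A := sq_nonneg _
  -- choose N
  set N : ℕ := max (max 1 ⌈8 * m / δ⌉₊) ⌈64 * A / (ε * δ ^ 2)⌉₊ with hN
  refine ⟨N, fun n hn => ?_⟩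
  have hn1 : 1 ≤ n := le_trans (le_max_left _ _) (le_trans (le_max_left _ _) hn)
  have hnR : (0 : ℝ) < n := by exact_mod_cast hn1
  have hnm : 8 * m / δ ≤ n :=
    le_trans (Nat.le_ceil _) (Nat.cast_le.2 (le_trans (le_max_right 1 _) (le_trans (le_max_left _ _) hn)))
  have hnA : 64 * A / (ε * δ ^ 2) ≤ n :=
    le_trans (Nat.le_ceil _) (Nat.cast_le.2 (le_trans (le_max_right _ _) hn))
  have h64 : 64 * A ≤ (n : ℝ) * (ε * δ ^ 2) := by
    rw [div_le_iff₀ (by positivity)] at hnA; linarith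
  have h8m : 8 * m ≤ (n : ℝ) * δ := by
    rw [div_le_iff₀ (by positivity)] at hnm; linarith
  have hmembd : ∀ i ∈ Finset.range (n + 1), i ≤ n := fun i hi =>
    Nat.lt_succ_iff.1 (Finset.mem_range.1 hi)
  set a : ℝ := (n : ℝ) * δ / 4 with ha
  have hapos : 0 < a := by positivity
  -- event inclusion
  have hincl : {ω | δ ≤ |(n : ℝ)⁻¹ * ∑ i ∈ Finset.range (n + 1), V n i ω - m|}
      ⊆ {ω | a ≤ |∑ i ∈ Finset.range (n + 1), (min (V n i ω) M - mM)|}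
        ∪ {ω | a ≤ ∑ i ∈ Finset.range (n + 1), (V n i ω - min (V n i ω) M)} := by
    intro ω hω
    simp only [Set.mem_setOf_eq, Set.mem_union] at hω ⊢
    by_contra hcon
    push_neg at hcon
    obtain ⟨h1, h2⟩ := hcon
    have e1 : ∑ i ∈ Finset.range (n + 1), (min (V n i ω) M - mM)
        = (∑ i ∈ Finset.range (n + 1), min (V n i ω) M) - ((n : ℝ) + 1) * mM := by
      rw [Finset.sum_sub_distrib, Finset.sum_const, Finset.card_range, nsmul_eq_mul]
      push_cast; ring
    have e2 : ∑ i ∈ Finset.range (n + 1), (V n i ω - min (V n i ω) M)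
        = (∑ i ∈ Finset.range (n + 1), V n i ω)
          - ∑ i ∈ Finset.range (n + 1), min (V n i ω) M := Finset.sum_sub_distrib _ _
    have hdecomp : (n : ℝ)⁻¹ * ∑ i ∈ Finset.range (n + 1), V n i ω - m
        = (n : ℝ)⁻¹ * (∑ i ∈ Finset.range (n + 1), (min (V n i ω) M - mM))
          + (n : ℝ)⁻¹ * (∑ i ∈ Finset.range (n + 1), (V n i ω - min (V n i ω) M))
          + (mM / n - r) := by
      rw [e1, e2]
      field_simp
      ring
    have htail_nonneg : 0 ≤ ∑ i ∈ Finset.range (n + 1), (V n i ω - min (V n i ω) M) :=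
      Finset.sum_nonneg fun i _ => sub_nonneg.2 (min_le_left _ _)
    have hdet : |mM / n - r| ≤ δ / 4 := by
      have hb1 : mM / (n : ℝ) ≤ m / n := by gcongr
      have hb2 : m / (n : ℝ) ≤ δ / 8 := by rw [div_le_iff₀ hnR]; linarith
      have hb3 : (0 : ℝ) ≤ mM / n := by positivity
      have hb4 : rb ≤ δ / 8 := min_le_left _ _
      rw [abs_le]
      constructor <;> linarith
    have hAbd : |(n : ℝ)⁻¹ * (∑ i ∈ Finset.range (n + 1), (min (V n i ω) M - mM))| < δ / 4 := by
      rw [abs_mul, abs_of_nonneg (inv_nonneg.2 hnR.le)]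
      calc (n : ℝ)⁻¹ * |∑ i ∈ Finset.range (n + 1), (min (V n i ω) M - mM)|
          < (n : ℝ)⁻¹ * a := by
            exact mul_lt_mul_of_pos_left h1 (inv_pos.2 hnR)
        _ = δ / 4 := by rw [ha]; field_simp
    have hBbd : (n : ℝ)⁻¹ * (∑ i ∈ Finset.range (n + 1), (V n i ω - min (V n i ω) M)) < δ / 4 := by
      calc (n : ℝ)⁻¹ * (∑ i ∈ Finset.range (n + 1), (V n i ω - min (V n i ω) M))
          < (n : ℝ)⁻¹ * a := mul_lt_mul_of_pos_left h2 (inv_pos.2 hnR)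
        _ = δ / 4 := by rw [ha]; field_simp
    have hBnn : 0 ≤ (n : ℝ)⁻¹ * (∑ i ∈ Finset.range (n + 1), (V n i ω - min (V n i ω) M)) :=
      mul_nonneg (inv_nonneg.2 hnR.le) htail_nonneg
    have habs : |(n : ℝ)⁻¹ * ∑ i ∈ Finset.range (n + 1), V n i ω - m|
        ≤ |(n : ℝ)⁻¹ * (∑ i ∈ Finset.range (n + 1), (min (V n i ω) M - mM))|
          + (n : ℝ)⁻¹ * (∑ i ∈ Finset.range (n + 1), (V n i ω - min (V n i ω) M))
          + |mM / n - r| := by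
      rw [hdecomp]
      calc |_ + _ + (mM / n - r)| ≤ |_ + _| + |mM / n - r| := abs_add_le _ _
        _ ≤ |_| + |_| + |mM / n - r| := by gcongr; exact abs_add_le _ _
        _ = _ := by rw [abs_of_nonneg hBnn]
    linarith
  -- truncated part: Chebyshev
  have hφmeas : Measurable fun v : ℝ => min v (M : ℝ) - mM :=
    (measurable_id.min measurable_const).sub measurable_const
  have hgmeas : ∀ i, Measurable fun ω => min (V n i ω) M - mM :=
    fun i => (hmeas n i).min measurable_const |>.sub measurable_const
  have hgbd : ∀ i ω, |min (V n i ω) M - mM| ≤ (M : ℝ) + m := by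
    intro i ω
    rw [abs_le]
    constructor
    · have : 0 ≤ min (V n i ω) (M : ℝ) := le_min (hnonneg n i ω) (Nat.cast_nonneg M)
      nlinarith [Nat.cast_nonneg (α := ℝ) M]
    · have : min (V n i ω) (M : ℝ) ≤ M := min_le_right _ _
      linarith
  have hgsq_int : ∀ i, Integrable (fun ω => (min (V n i ω) M - mM) ^ 2) ℙ := by
    intro i
    refine (integrable_const A).mono' (((hgmeas i).pow_const 2).aestronglyMeasurable)
      (Eventually.of_forall fun ω => ?_)
    rw [Real.norm_eq_abs, abs_of_nonneg (sq_nonneg _), hA]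
    calc (min (V n i ω) M - mM) ^ 2 = |min (V n i ω) M - mM| ^ 2 := (sq_abs _).symm
      _ ≤ ((M : ℝ) + m) ^ 2 := by
          have := hgbd i ω
          have h0 : (0 : ℝ) ≤ |min (V n i ω) M - mM| := abs_nonneg _
          nlinarith
  have hgL2 : ∀ i ∈ Finset.range (n + 1), MemLp (fun ω => min (V n i ω) M - mM) 2 ℙ := by
    intro i _
    exact (memLp_two_iff_integrable_sq (hgmeas i).aestronglyMeasurable).2 (hgsq_int i)
  have hgavg : ∀ i, i ≤ n → ∫ ω, (min (V n i ω) M - mM) ∂ℙ = 0 := by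
    intro i hi
    rw [integral_sub (hWiint n i hi) (integrable_const mM), hWiavg n i hi, integral_const]
    simp
  have hortho : ∀ i ∈ Finset.range (n + 1), ∀ j ∈ Finset.range (n + 1), i ≠ j →
      ∫ ω, (min (V n i ω) M - mM) * (min (V n j ω) M - mM) ∂ℙ = 0 := by
    intro i hi j hj hij
    have hind : IndepFun (fun ω => min (V n i ω) M - mM) (fun ω => min (V n j ω) M - mM) ℙ :=
      (hindep n i j (hmembd i hi) (hmembd j hj) hij).comp hφmeas hφmeas
    rw [hind.integral_fun_mul_eq_mul_integral (hgmeas i).aestronglyMeasurable (hgmeas j).aestronglyMeasurable,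
      hgavg i (hmembd i hi), hgavg j (hmembd j hj), mul_zero]
  obtain ⟨hint2, hval⟩ := integral_sq_sum (Finset.range (n + 1))
    (fun i ω => min (V n i ω) M - mM) hgL2 hortho
  have hgsq_le : ∀ i ∈ Finset.range (n + 1), ∫ ω, (min (V n i ω) M - mM) ^ 2 ∂ℙ ≤ A := by
    intro i _
    calc ∫ ω, (min (V n i ω) M - mM) ^ 2 ∂ℙ ≤ ∫ _ω, A ∂ℙ := by
          refine integral_mono (hgsq_int i) (integrable_const A) fun ω => ?_
          calc (min (V n i ω) M - mM) ^ 2 = |min (V n i ω) M - mM| ^ 2 := (sq_abs _).symm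
            _ ≤ ((M : ℝ) + m) ^ 2 := by
                have := hgbd i ω
                have h0 : (0 : ℝ) ≤ |min (V n i ω) M - mM| := abs_nonneg _
                nlinarith
      _ = A := by simp
  have hvalle : ∫ ω, (∑ i ∈ Finset.range (n + 1), (min (V n i ω) M - mM)) ^ 2 ∂ℙ
      ≤ ((n : ℝ) + 1) * A := by
    rw [hval]
    calc ∑ i ∈ Finset.range (n + 1), ∫ ω, (min (V n i ω) M - mM) ^ 2 ∂ℙ
        ≤ ∑ _i ∈ Finset.range (n + 1), A := Finset.sum_le_sum hgsq_le
      _ = ((n : ℝ) + 1) * A := by rw [Finset.sum_const, Finset.card_range, nsmul_eq_mul]; push_cast; ring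
  have hE1 : ℙ {ω | a ≤ |∑ i ∈ Finset.range (n + 1), (min (V n i ω) M - mM)|}
      ≤ ENNReal.ofReal (ε / 2) := by
    refine le_trans (cheb hint2 hapos) (ENNReal.ofReal_le_ofReal ?_)
    have hn4 : (0 : ℝ) < a ^ 2 := by positivity
    rw [div_le_iff₀ hn4]
    have h2 : ((n : ℝ) + 1) ≤ 2 * n := by
      have : (1 : ℝ) ≤ n := by exact_mod_cast hn1
      linarith
    have key : 2 * (n : ℝ) * A ≤ ε / 2 * a ^ 2 := by
      rw [ha]
      have := mul_le_mul_of_nonneg_left h64 (show (0 : ℝ) ≤ (n : ℝ) / 32 by positivity)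
      nlinarith [hnR.le]
    nlinarith [hvalle, mul_le_mul_of_nonneg_right h2 hA0]
  -- tail part: Markov
  have htl_int : Integrable (fun ω => ∑ i ∈ Finset.range (n + 1), (V n i ω - min (V n i ω) M)) ℙ :=
    integrable_finset_sum _ fun i hi => (hVint n i (hmembd i hi)).sub (hWiint n i (hmembd i hi))
  have htl_avg : ∫ ω, ∑ i ∈ Finset.range (n + 1), (V n i ω - min (V n i ω) M) ∂ℙ
      = ((n : ℝ) + 1) * r := by
    rw [integral_finset_sum (f := fun i ω => V n i ω - min (V n i ω) M) _
      (fun i hi => (hVint n i (hmembd i hi)).sub (hWiint n i (hmembd i hi)))]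
    have : ∀ i ∈ Finset.range (n + 1), ∫ ω, (V n i ω - min (V n i ω) M) ∂ℙ = r := by
      intro i hi
      rw [integral_sub (hVint n i (hmembd i hi)) (hWiint n i (hmembd i hi)),
        hVavg n i (hmembd i hi), hWiavg n i (hmembd i hi)]
    rw [Finset.sum_congr rfl this, Finset.sum_const, Finset.card_range, nsmul_eq_mul]
    push_cast; ring
  have hE2 : ℙ {ω | a ≤ ∑ i ∈ Finset.range (n + 1), (V n i ω - min (V n i ω) M)}
      ≤ ENNReal.ofReal (ε / 2) := by
    refine le_trans (markov (fun ω => Finset.sum_nonneg fun i _ => sub_nonneg.2 (min_le_left _ _))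
      htl_int hapos) (ENNReal.ofReal_le_ofReal ?_)
    rw [htl_avg, div_le_iff₀ hapos, ha]
    have h2 : ((n : ℝ) + 1) ≤ 2 * n := by
      have : (1 : ℝ) ≤ n := by exact_mod_cast hn1
      linarith
    have hrb2 : r ≤ ε * δ / 16 := le_trans hr_lt.le (min_le_right _ _)
    nlinarith [hnR.le, hr_nonneg, mul_le_mul_of_nonneg_right h2 hr_nonneg]
  calc ℙ {ω | δ ≤ |(n : ℝ)⁻¹ * ∑ i ∈ Finset.range (n + 1), V n i ω - m|}
      ≤ ℙ ({ω | a ≤ |∑ i ∈ Finset.range (n + 1), (min (V n i ω) M - mM)|}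
          ∪ {ω | a ≤ ∑ i ∈ Finset.range (n + 1), (V n i ω - min (V n i ω) M)}) :=
        measure_mono hincl
    _ ≤ _ + _ := measure_union_le _ _
    _ ≤ ENNReal.ofReal (ε / 2) + ENNReal.ofReal (ε / 2) := add_le_add hE1 hE2
    _ = ENNReal.ofReal ε := by
        rw [← ENNReal.ofReal_add (by positivity) (by positivity)]
        norm_num


end NoiseVar

open NoiseVar

/-- **Consistency of the noise-variance estimator `ω̂²` (Zhang–Mykland–Aït-Sahalia).**
If for each `n` the noise variables `U_{n,0}, …, U_{n,n}` are i.i.d. centered with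
variance `w²` (common law not depending on `n`), and the realised quadratic variation
of the signal `X` is bounded in probability, then
`ω̂²_n = (2n)⁻¹ ∑_{i=1}^n ((X_{n,i}+U_{n,i}) - (X_{n,i-1}+U_{n,i-1}))² → w²`
in probability. -/
theorem noise_variance_estimator_consistent
    {Ω : Type*} [MeasureSpace Ω] [IsProbabilityMeasure (ℙ : Measure Ω)]
    (w : ℝ) (X U : ℕ → ℕ → Ω → ℝ)
    (hXmeas : ∀ n i, Measurable (X n i))
    (hUmeas : ∀ n i, Measurable (U n i))
    (hUindep : ∀ n, iIndepFun
      (fun i : Fin (n + 1) => U n i.val) ℙ)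
    (hUident : ∀ n i, i ≤ n → IdentDistrib (U n i) (U 0 0) ℙ ℙ)
    (hUL2 : MemLp (U 0 0) 2 ℙ)
    (hUmean : ∫ ω, U 0 0 ω ∂ℙ = 0)
    (hUvar : ∫ ω, (U 0 0 ω) ^ 2 ∂ℙ = w ^ 2)
    (hQbdd : ∀ ε : ℝ, 0 < ε → ∃ C : ℝ, 0 < C ∧ ∀ n : ℕ,
      ℙ {ω | C < |∑ i ∈ Finset.range n, (X n (i + 1) ω - X n i ω) ^ 2|}
        ≤ ENNReal.ofReal ε) :
    TendstoInMeasure ℙ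
      (fun (n : ℕ) (ω : Ω) => (2 * (n : ℝ))⁻¹ *
        ∑ i ∈ Finset.range n,
          ((X n (i + 1) ω + U n (i + 1) ω) - (X n i ω + U n i ω)) ^ 2)
      atTop (fun _ => w ^ 2) := by
  classical
  have hpair : ∀ n i j, i ≤ n → j ≤ n → i ≠ j → IndepFun (U n i) (U n j) ℙ := by
    intro n i j hi hj hij
    exact (hUindep n).indepFun (i := ⟨i, Nat.lt_succ_of_le hi⟩) (j := ⟨j, Nat.lt_succ_of_le hj⟩)
      (Fin.ne_of_val_ne hij)
  have hUsq_int : Integrable (fun ω => (U 0 0 ω) ^ 2) ℙ := hUL2.integrable_sq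
  have hUint : Integrable (U 0 0) ℙ := hUL2.integrable one_le_two
  have hUiint : ∀ n i, i ≤ n → Integrable (U n i) ℙ :=
    fun n i hi => (hUident n i hi).integrable_iff.2 hUint
  have hUimean : ∀ n i, i ≤ n → ∫ ω, U n i ω ∂ℙ = 0 :=
    fun n i hi => ((hUident n i hi).integral_eq).trans hUmean
  have hUsqid : ∀ n i, i ≤ n →
      IdentDistrib (fun ω => (U n i ω) ^ 2) (fun ω => (U 0 0 ω) ^ 2) ℙ ℙ :=
    fun n i hi => (hUident n i hi).comp (measurable_id.pow_const 2)
  have hUisq_int : ∀ n i, i ≤ n → Integrable (fun ω => (U n i ω) ^ 2) ℙ :=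
    fun n i hi => (hUsqid n i hi).integrable_iff.2 hUsq_int
  have hUisq_avg : ∀ n i, i ≤ n → ∫ ω, (U n i ω) ^ 2 ∂ℙ = w ^ 2 :=
    fun n i hi => ((hUsqid n i hi).integral_eq).trans hUvar
  -- Piece (C3): WLLN for the squares.
  have hC3 : ConvProb (fun n ω => (n : ℝ)⁻¹ * ∑ i ∈ Finset.range (n + 1), (U n i ω) ^ 2)
      (w ^ 2) := by
    have h := wlln (V := fun n i ω => (U n i ω) ^ 2)
      (fun n i => (hUmeas n i).pow_const 2)
      (fun n i ω => sq_nonneg _)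
      (fun n i j hi hj hij => (hpair n i j hi hj hij).comp
        (measurable_id.pow_const 2) (measurable_id.pow_const 2))
      (fun n i hi => (hUident n i hi).comp (measurable_id.pow_const 2))
      hUsq_int
    rwa [hUvar] at h
  -- Piece (C4): boundary terms.
  have hC4 : ConvProb (fun n ω => (2 * (n : ℝ))⁻¹ * ((U n 0 ω) ^ 2 + (U n n ω) ^ 2)) 0 := by
    refine convProb_of_forall fun δ hδ ε hε => ?_
    refine ⟨max 1 ⌈4 * w ^ 2 / (ε * δ)⌉₊, fun n hn => ?_⟩
    have hn1 : 1 ≤ n := le_trans (le_max_left _ _) hn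
    have hnR : (0 : ℝ) < n := by exact_mod_cast hn1
    have hnw : 4 * w ^ 2 / (ε * δ) ≤ n :=
      le_trans (Nat.le_ceil _) (Nat.cast_le.2 (le_trans (le_max_right _ _) hn))
    have hkey : w ^ 2 / ((n : ℝ) * δ) ≤ ε / 2 := by
      rw [div_le_iff₀ (by positivity)]
      rw [div_le_iff₀ (by positivity)] at hnw
      nlinarith
    have hincl : {ω | δ ≤ |(2 * (n : ℝ))⁻¹ * ((U n 0 ω) ^ 2 + (U n n ω) ^ 2) - 0|}
        ⊆ {ω | (n : ℝ) * δ ≤ (U n 0 ω) ^ 2} ∪ {ω | (n : ℝ) * δ ≤ (U n n ω) ^ 2} := by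
      intro ω hω
      simp only [Set.mem_setOf_eq, Set.mem_union, sub_zero] at hω ⊢
      by_contra hcon
      push_neg at hcon
      have h0 : (0 : ℝ) ≤ (U n 0 ω) ^ 2 + (U n n ω) ^ 2 := by positivity
      rw [abs_of_nonneg (mul_nonneg (by positivity) h0)] at hω
      have h2n : (0 : ℝ) < 2 * n := by positivity
      have hs : 2 * (n : ℝ) * δ ≤ (U n 0 ω) ^ 2 + (U n n ω) ^ 2 := by
        have h1 := mul_le_mul_of_nonneg_left hω h2n.le
        rwa [← mul_assoc, mul_inv_cancel₀ (ne_of_gt h2n), one_mul] at h1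
      have := hcon.1
      have := hcon.2
      linarith
    have hm1 : ℙ {ω | (n : ℝ) * δ ≤ (U n 0 ω) ^ 2} ≤ ENNReal.ofReal (ε / 2) := by
      refine le_trans (markov (fun ω => sq_nonneg _) (hUisq_int n 0 (Nat.zero_le n))
        (by positivity)) (ENNReal.ofReal_le_ofReal ?_)
      rw [hUisq_avg n 0 (Nat.zero_le n)]
      exact hkey
    have hm2 : ℙ {ω | (n : ℝ) * δ ≤ (U n n ω) ^ 2} ≤ ENNReal.ofReal (ε / 2) := by
      refine le_trans (markov (fun ω => sq_nonneg _) (hUisq_int n n le_rfl)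
        (by positivity)) (ENNReal.ofReal_le_ofReal ?_)
      rw [hUisq_avg n n le_rfl]
      exact hkey
    calc ℙ {ω | δ ≤ |(2 * (n : ℝ))⁻¹ * ((U n 0 ω) ^ 2 + (U n n ω) ^ 2) - 0|}
        ≤ ℙ ({ω | (n : ℝ) * δ ≤ (U n 0 ω) ^ 2} ∪ {ω | (n : ℝ) * δ ≤ (U n n ω) ^ 2}) :=
          measure_mono hincl
      _ ≤ _ + _ := measure_union_le _ _
      _ ≤ ENNReal.ofReal (ε / 2) + ENNReal.ofReal (ε / 2) := add_le_add hm1 hm2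
      _ = ENNReal.ofReal ε := by
          rw [← ENNReal.ofReal_add (by positivity) (by positivity)]; norm_num
  -- Piece (C5): cross terms of the noise, via a second-moment (Chebyshev) bound.
  have hC5 : ConvProb (fun n ω => (n : ℝ)⁻¹ * ∑ i ∈ Finset.range n, U n i ω * U n (i + 1) ω)
      0 := by
    refine convProb_of_forall fun δ hδ ε hε => ?_
    refine ⟨max 1 ⌈w ^ 2 * w ^ 2 / (ε * δ ^ 2)⌉₊, fun n hn => ?_⟩
    have hn1 : 1 ≤ n := le_trans (le_max_left _ _) hn
    have hnR : (0 : ℝ) < n := by exact_mod_cast hn1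
    have hnw : w ^ 2 * w ^ 2 / (ε * δ ^ 2) ≤ n :=
      le_trans (Nat.le_ceil _) (Nat.cast_le.2 (le_trans (le_max_right _ _) hn))
    have hmem : ∀ i ∈ Finset.range n, i + 1 ≤ n := fun i hi => Finset.mem_range.1 hi
    have hgmeas : ∀ i, Measurable fun ω => U n i ω * U n (i + 1) ω :=
      fun i => (hUmeas n i).mul (hUmeas n (i + 1))
    have hsqfacts : ∀ i, i + 1 ≤ n →
        Integrable (fun ω => (U n i ω * U n (i + 1) ω) ^ 2) ℙ ∧
          ∫ ω, (U n i ω * U n (i + 1) ω) ^ 2 ∂ℙ = w ^ 2 * w ^ 2 := by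
      intro i hi
      have hii : i ≤ n := le_trans (Nat.le_succ i) hi
      have hind : IndepFun (fun ω => (U n i ω) ^ 2) (fun ω => (U n (i + 1) ω) ^ 2) ℙ :=
        (hpair n i (i + 1) hii hi (Nat.ne_of_lt (Nat.lt_succ_self i))).comp
          (measurable_id.pow_const 2) (measurable_id.pow_const 2)
      have hint2 : Integrable (fun ω => (U n i ω) ^ 2 * (U n (i + 1) ω) ^ 2) ℙ :=
        hind.integrable_mul (hUisq_int n i hii) (hUisq_int n (i + 1) hi)
      constructor
      · simpa [mul_pow] using hint2
      · have hrw : (fun ω => (U n i ω * U n (i + 1) ω) ^ 2)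
            = fun ω => (U n i ω) ^ 2 * (U n (i + 1) ω) ^ 2 := funext fun ω => by ring
        rw [hrw, hind.integral_fun_mul_eq_mul_integral ((hUmeas n i).pow_const 2).aestronglyMeasurable
            ((hUmeas n (i + 1)).pow_const 2).aestronglyMeasurable,
          hUisq_avg n i hii, hUisq_avg n (i + 1) hi]
    have hgL2 : ∀ i ∈ Finset.range n, MemLp (fun ω => U n i ω * U n (i + 1) ω) 2 ℙ :=
      fun i hi => (memLp_two_iff_integrable_sq (hgmeas i).aestronglyMeasurable).2
        (hsqfacts i (hmem i hi)).1
    have hgmean : ∀ i, i + 1 ≤ n → ∫ ω, U n i ω * U n (i + 1) ω ∂ℙ = 0 := by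
      intro i hi
      have hii : i ≤ n := le_trans (Nat.le_succ i) hi
      rw [(hpair n i (i + 1) hii hi (Nat.ne_of_lt (Nat.lt_succ_self i))).integral_fun_mul_eq_mul_integral
          (hUmeas n i).aestronglyMeasurable (hUmeas n (i + 1)).aestronglyMeasurable,
        hUimean n i hii, zero_mul]
    have hkey : ∀ i j, i < j → j + 1 ≤ n →
        ∫ ω, (U n i ω * U n (i + 1) ω) * (U n j ω * U n (j + 1) ω) ∂ℙ = 0 := by
      intro i j hij hjn
      have hfm : ∀ k : Fin (n + 1), Measurable fun ω => U n k.val ω := fun k => hUmeas n k.val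
      rcases eq_or_lt_of_le (Nat.succ_le_of_lt hij) with heq | hlt
      · -- j = i + 1
        subst heq
        have hi2 : i + 1 + 1 < n + 1 := Nat.lt_succ_of_le hjn
        have hind0 := (hUindep n).indepFun_prodMk hfm
          ⟨i, by omega⟩ ⟨i + 1 + 1, hi2⟩ ⟨i + 1, by omega⟩
          (by simp only [ne_eq, Fin.mk.injEq]; omega) (by simp only [ne_eq, Fin.mk.injEq]; omega)
        have hind : IndepFun (fun ω => U n i ω * U n (i + 1 + 1) ω)
            (fun ω => (U n (i + 1) ω) ^ 2) ℙ :=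
          hind0.comp (measurable_fst.mul measurable_snd) (measurable_id.pow_const 2)
        have hrw : (fun ω => (U n i ω * U n (i + 1) ω) * (U n (i + 1) ω * U n (i + 1 + 1) ω))
            = fun ω => (U n i ω * U n (i + 1 + 1) ω) * (U n (i + 1) ω) ^ 2 :=
          funext fun ω => by ring
        rw [hrw, hind.integral_fun_mul_eq_mul_integral
            ((hUmeas n i).mul (hUmeas n (i + 1 + 1))).aestronglyMeasurable
            ((hUmeas n (i + 1)).pow_const 2).aestronglyMeasurable]
        have h0 : ∫ ω, U n i ω * U n (i + 1 + 1) ω ∂ℙ = 0 := by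
          rw [(hpair n i (i + 1 + 1) (by omega) (by omega) (by omega)).integral_fun_mul_eq_mul_integral
              (hUmeas n i).aestronglyMeasurable (hUmeas n (i + 1 + 1)).aestronglyMeasurable,
            hUimean n i (by omega), zero_mul]
        rw [h0, zero_mul]
      · -- i + 1 < j
        have hind0 := (hUindep n).indepFun_prodMk_prodMk hfm
          ⟨i, by omega⟩ ⟨i + 1, by omega⟩ ⟨j, by omega⟩ ⟨j + 1, by omega⟩
          (by simp only [ne_eq, Fin.mk.injEq]; omega) (by simp only [ne_eq, Fin.mk.injEq]; omega)
          (by simp only [ne_eq, Fin.mk.injEq]; omega) (by simp only [ne_eq, Fin.mk.injEq]; omega)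
        have hind : IndepFun (fun ω => U n i ω * U n (i + 1) ω)
            (fun ω => U n j ω * U n (j + 1) ω) ℙ :=
          hind0.comp (measurable_fst.mul measurable_snd) (measurable_fst.mul measurable_snd)
        rw [hind.integral_fun_mul_eq_mul_integral
            ((hUmeas n i).mul (hUmeas n (i + 1))).aestronglyMeasurable
            ((hUmeas n j).mul (hUmeas n (j + 1))).aestronglyMeasurable,
          hgmean i (by omega), zero_mul]
    have hortho : ∀ i ∈ Finset.range n, ∀ j ∈ Finset.range n, i ≠ j →
        ∫ ω, (U n i ω * U n (i + 1) ω) * (U n j ω * U n (j + 1) ω) ∂ℙ = 0 := by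
      intro i hi j hj hij
      rcases lt_or_gt_of_ne hij with h | h
      · exact hkey i j h (hmem j hj)
      · have hrw : (fun ω => (U n i ω * U n (i + 1) ω) * (U n j ω * U n (j + 1) ω))
            = fun ω => (U n j ω * U n (j + 1) ω) * (U n i ω * U n (i + 1) ω) :=
          funext fun ω => by ring
        rw [hrw]
        exact hkey j i h (hmem i hi)
    obtain ⟨hintS, hvalS⟩ := integral_sq_sum (Finset.range n)
      (fun i ω => U n i ω * U n (i + 1) ω) hgL2 hortho
    have hvalS' : ∫ ω, (∑ i ∈ Finset.range n, U n i ω * U n (i + 1) ω) ^ 2 ∂ℙ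
        = (n : ℝ) * (w ^ 2 * w ^ 2) := by
      rw [hvalS, Finset.sum_congr rfl (fun i hi => (hsqfacts i (hmem i hi)).2),
        Finset.sum_const, Finset.card_range, nsmul_eq_mul]
    have hincl : {ω | δ ≤ |(n : ℝ)⁻¹ * ∑ i ∈ Finset.range n, U n i ω * U n (i + 1) ω - 0|}
        ⊆ {ω | (n : ℝ) * δ ≤ |∑ i ∈ Finset.range n, U n i ω * U n (i + 1) ω|} := by
      intro ω hω
      simp only [Set.mem_setOf_eq, sub_zero] at hω ⊢
      rw [abs_mul, abs_of_nonneg (inv_nonneg.2 hnR.le)] at hω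
      have h1 := mul_le_mul_of_nonneg_left hω (le_of_lt hnR)
      rw [← mul_assoc, mul_inv_cancel₀ (ne_of_gt hnR), one_mul] at h1
      linarith [h1]
    refine le_trans (measure_mono hincl) (le_trans (cheb hintS (by positivity))
      (ENNReal.ofReal_le_ofReal ?_))
    rw [hvalS', div_le_iff₀ (by positivity)]
    rw [div_le_iff₀ (by positivity)] at hnw
    nlinarith [hnR.le, sq_nonneg w]
  -- Combination: the averaged squared noise increments converge to `w ^ 2`.
  have hCsum : ConvProb (fun n ω => (2 * (n : ℝ))⁻¹ *
      ∑ i ∈ Finset.range n, (U n (i + 1) ω - U n i ω) ^ 2) (w ^ 2) := by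
    have hcomb := (hC3.add hC4.neg).add hC5.neg
    rw [show w ^ 2 + -0 + -0 = w ^ 2 by ring] at hcomb
    refine hcomb.congr ?_
    filter_upwards [eventually_ge_atTop 1] with n hn
    intro ω
    have hnR : ((n : ℝ)) ≠ 0 := by
      have : (0 : ℝ) < n := by exact_mod_cast hn
      exact ne_of_gt this
    have hiden := sum_sq_diff (fun i => U n i ω) n
    rw [hiden]
    field_simp
    ring
  -- Piece (A): the signal part.
  have hA : ConvProb (fun n ω => (2 * (n : ℝ))⁻¹ *
      ∑ i ∈ Finset.range n, (X n (i + 1) ω - X n i ω) ^ 2) 0 := by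
    refine convProb_of_forall fun δ hδ ε hε => ?_
    obtain ⟨C, hCpos, hCb⟩ := hQbdd ε hε
    refine ⟨⌈C / δ⌉₊ + 1, fun n hn => ?_⟩
    have hnC : C / δ < n := by
      refine lt_of_le_of_lt (Nat.le_ceil _) ?_
      exact_mod_cast Nat.lt_of_lt_of_le (Nat.lt_succ_self _) hn
    have hnR : (0 : ℝ) < n := lt_of_le_of_lt (div_nonneg hCpos.le hδ.le) hnC
    refine le_trans (measure_mono ?_) (hCb n)
    intro ω hω
    simp only [Set.mem_setOf_eq, sub_zero] at hω ⊢
    by_contra hcon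
    push_neg at hcon
    rw [abs_mul, abs_of_nonneg (show (0:ℝ) ≤ (2 * (n:ℝ))⁻¹ by positivity)] at hω
    have h1 : (2 * (n : ℝ))⁻¹ * |∑ i ∈ Finset.range n, (X n (i + 1) ω - X n i ω) ^ 2|
        ≤ (2 * (n : ℝ))⁻¹ * C := by gcongr
    have h2 : (2 * (n : ℝ))⁻¹ * C < δ := by
      rw [inv_mul_lt_iff₀ (by positivity)]
      rw [div_lt_iff₀ hδ] at hnC
      nlinarith
    linarith
  -- Piece (B): the cross term, via Cauchy-Schwarz.
  have hB : ConvProb (fun n ω => (n : ℝ)⁻¹ * ∑ i ∈ Finset.range n,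
      (X n (i + 1) ω - X n i ω) * (U n (i + 1) ω - U n i ω)) 0 := by
    refine convProb_of_forall fun δ hδ ε hε => ?_
    have hε2 : 0 < ε / 2 := by linarith
    obtain ⟨C, hCpos, hCb⟩ := hQbdd (ε / 2) hε2
    obtain ⟨N1, hN1⟩ := hCsum.eventually_le one_pos hε2
    set D : ℝ := 2 * (w ^ 2 + 1) with hD
    have hDpos : 0 < D := by positivity
    refine ⟨max N1 (⌈C * D / δ ^ 2⌉₊ + 1), fun n hn => ?_⟩
    have hnN1 : N1 ≤ n := le_trans (le_max_left _ _) hn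
    have hnD : C * D / δ ^ 2 < n := by
      refine lt_of_le_of_lt (Nat.le_ceil _) ?_
      exact_mod_cast Nat.lt_of_lt_of_le (Nat.lt_succ_self _) (le_trans (le_max_right _ _) hn)
    have hnR : (0 : ℝ) < n := lt_of_le_of_lt (by positivity) hnD
    have hincl : {ω | δ ≤ |(n : ℝ)⁻¹ * ∑ i ∈ Finset.range n,
          (X n (i + 1) ω - X n i ω) * (U n (i + 1) ω - U n i ω) - 0|}
        ⊆ {ω | C < |∑ i ∈ Finset.range n, (X n (i + 1) ω - X n i ω) ^ 2|}
          ∪ {ω | 1 ≤ |(2 * (n : ℝ))⁻¹ *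
              ∑ i ∈ Finset.range n, (U n (i + 1) ω - U n i ω) ^ 2 - w ^ 2|} := by
      intro ω hω
      simp only [Set.mem_setOf_eq, Set.mem_union, sub_zero] at hω ⊢
      by_contra hcon
      push_neg at hcon
      obtain ⟨hq, hu⟩ := hcon
      set Q := ∑ i ∈ Finset.range n, (X n (i + 1) ω - X n i ω) ^ 2 with hQdef
      set R := ∑ i ∈ Finset.range n, (U n (i + 1) ω - U n i ω) ^ 2 with hRdef
      have hQnn : 0 ≤ Q := Finset.sum_nonneg fun i _ => sq_nonneg _
      have hRnn : 0 ≤ R := Finset.sum_nonneg fun i _ => sq_nonneg _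
      have hQle : Q ≤ C := by rwa [abs_of_nonneg hQnn] at hq
      have hRle : R < (n : ℝ) * D := by
        have h1 : (2 * (n : ℝ))⁻¹ * R - w ^ 2 < 1 := lt_of_abs_lt hu
        have h2 : (2 * (n : ℝ))⁻¹ * R < w ^ 2 + 1 := by linarith
        have h3 := mul_lt_mul_of_pos_left h2 (show (0 : ℝ) < 2 * n by positivity)
        rw [← mul_assoc, mul_inv_cancel₀ (show (2 * (n : ℝ)) ≠ 0 by positivity), one_mul] at h3
        calc R < 2 * (n : ℝ) * (w ^ 2 + 1) := h3
          _ = (n : ℝ) * D := by rw [hD]; ring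
      have hCS := Finset.sum_mul_sq_le_sq_mul_sq (Finset.range n)
        (fun i => X n (i + 1) ω - X n i ω) (fun i => U n (i + 1) ω - U n i ω)
      have hprod : Q * R ≤ C * ((n : ℝ) * D) := by
        have := mul_le_mul hQle hRle.le hRnn hCpos.le
        linarith
      have hsq : (∑ i ∈ Finset.range n,
          (X n (i + 1) ω - X n i ω) * (U n (i + 1) ω - U n i ω)) ^ 2 < ((n : ℝ) * δ) ^ 2 := by
        have hlt : C * ((n : ℝ) * D) < ((n : ℝ) * δ) ^ 2 := by
          rw [div_lt_iff₀ (by positivity)] at hnD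
          have h1 : 1 ≤ (n : ℝ) := by exact_mod_cast Nat.one_le_iff_ne_zero.2 (by
            intro h0; rw [h0] at hnR; simp at hnR)
          nlinarith
        calc (∑ i ∈ Finset.range n,
            (X n (i + 1) ω - X n i ω) * (U n (i + 1) ω - U n i ω)) ^ 2
            ≤ Q * R := hCS
          _ ≤ C * ((n : ℝ) * D) := hprod
          _ < ((n : ℝ) * δ) ^ 2 := hlt
      have habs : |∑ i ∈ Finset.range n,
          (X n (i + 1) ω - X n i ω) * (U n (i + 1) ω - U n i ω)| < (n : ℝ) * δ :=
        abs_lt_of_sq_lt_sq hsq (by positivity)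
      rw [abs_mul, abs_of_nonneg (inv_nonneg.2 hnR.le)] at hω
      have h1 := mul_le_mul_of_nonneg_left hω (le_of_lt hnR)
      rw [← mul_assoc, mul_inv_cancel₀ (ne_of_gt hnR), one_mul] at h1
      linarith
    calc ℙ _ ≤ ℙ ({ω | C < |∑ i ∈ Finset.range n, (X n (i + 1) ω - X n i ω) ^ 2|}
          ∪ {ω | 1 ≤ |(2 * (n : ℝ))⁻¹ *
              ∑ i ∈ Finset.range n, (U n (i + 1) ω - U n i ω) ^ 2 - w ^ 2|}) :=
          measure_mono hincl
      _ ≤ _ + _ := measure_union_le _ _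
      _ ≤ ENNReal.ofReal (ε / 2) + ENNReal.ofReal (ε / 2) :=
          add_le_add (hCb n) (hN1 n hnN1)
      _ = ENNReal.ofReal ε := by
          rw [← ENNReal.ofReal_add (by positivity) (by positivity)]; norm_num
  -- Assemble.
  have hfinal := (hA.add hB).add hCsum
  rw [show (0 : ℝ) + 0 + w ^ 2 = w ^ 2 by ring] at hfinal
  have hfinal2 : ConvProb (fun (n : ℕ) (ω : Ω) => (2 * (n : ℝ))⁻¹ *
      ∑ i ∈ Finset.range n,
        ((X n (i + 1) ω + U n (i + 1) ω) - (X n i ω + U n i ω)) ^ 2) (w ^ 2) := by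
    refine hfinal.congr ?_
    filter_upwards [eventually_ge_atTop 1] with n hn
    intro ω
    have hnR : ((n : ℝ)) ≠ 0 := by
      have : (0 : ℝ) < n := by exact_mod_cast hn
      exact ne_of_gt this
    have hexp : ∑ i ∈ Finset.range n,
        ((X n (i + 1) ω + U n (i + 1) ω) - (X n i ω + U n i ω)) ^ 2
        = ∑ i ∈ Finset.range n, (X n (i + 1) ω - X n i ω) ^ 2
          + 2 * ∑ i ∈ Finset.range n,
              (X n (i + 1) ω - X n i ω) * (U n (i + 1) ω - U n i ω)
          + ∑ i ∈ Finset.range n, (U n (i + 1) ω - U n i ω) ^ 2 := by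
      rw [Finset.mul_sum, ← Finset.sum_add_distrib, ← Finset.sum_add_distrib]
      exact Finset.sum_congr rfl fun i _ => by ring
    rw [hexp]
    field_simp
  rw [tendstoInMeasure_iff_norm]
  intro δ hδ
  have h := hfinal2 δ hδ
  simpa [Real.norm_eq_abs] using h
end

section
/- Let (U_i)_{i∈ℕ} be i.i.d. real random variables with E[U_0] = 0, E[U_0²] = ω² and E[U_0⁴] < ∞. Then the sequence √n · ((1/(2n)) Σ_{i=1}^{n} (U_i − U_{i−1})² − ω²) is bounded in probability; in particular (1/(2n)) Σ_{i=1}^{n} (U_i − U_{i−1})² converges to ω² in probability at rate n^{−1/2}. -/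
open MeasureTheory ProbabilityTheory Filter

set_option maxHeartbeats 1000000 in
/-- For i.i.d. centered noise with variance `w²` and finite fourth moment, the
sequence `√n ((2n)⁻¹ ∑_{i=1}^n (U_i - U_{i-1})² - w²)` is bounded in probability
(i.e. the estimator `ω̂²` converges to `w²` in probability at rate `n^{-1/2}`). -/
theorem noise_variance_estimator_rate
    {Ω : Type*} [MeasureSpace Ω] [IsProbabilityMeasure (ℙ : Measure Ω)]
    (w : ℝ) (U : ℕ → Ω → ℝ)
    (hUmeas : ∀ i, Measurable (U i))
    (hUindep : iIndepFun U ℙ)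
    (hUident : ∀ i, IdentDistrib (U i) (U 0) ℙ ℙ)
    (hUL4 : MemLp (U 0) 4 ℙ)
    (hUmean : ∫ ω, U 0 ω ∂ℙ = 0)
    (hUvar : ∫ ω, (U 0 ω) ^ 2 ∂ℙ = w ^ 2) :
    ∀ ε : ℝ, 0 < ε → ∃ C : ℝ, 0 < C ∧ ∀ n : ℕ,
      ℙ {ω | C < |Real.sqrt n *
          ((2 * (n : ℝ))⁻¹ * ∑ i ∈ Finset.range n, (U (i + 1) ω - U i ω) ^ 2
            - w ^ 2)|}
        ≤ ENNReal.ofReal ε := by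
  classical
  intro ε hε
  -- moments of U
  set ν : ℝ := ∫ ω, (U 0 ω) ^ 4 ∂ℙ with hνdef
  have hν0 : 0 ≤ ν := integral_nonneg fun ω => by positivity
  set M : ℝ := 32 * ν + 8 * w ^ 4 + 1 with hMdef
  have hw4 : (0:ℝ) ≤ w ^ 4 := by positivity
  have hM0 : 0 < M := by nlinarith
  have h4 : ∀ i, MemLp (U i) 4 ℙ := fun i => (hUident i).symm.memLp_snd hUL4
  have hInt4 : ∀ i, Integrable (fun ω => (U i ω) ^ 4) ℙ := by
    intro i
    have h := (h4 i).integrable_norm_rpow (by norm_num) (by norm_num)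
    refine h.congr (Filter.Eventually.of_forall fun ω => ?_)
    show ‖U i ω‖ ^ ((4 : ENNReal).toReal) = U i ω ^ 4
    rw [show ((4 : ENNReal).toReal) = ((4:ℕ):ℝ) by norm_num, Real.rpow_natCast,
      Real.norm_eq_abs, ← abs_pow, abs_of_nonneg (by positivity)]
  have hEq4 : ∀ i, ∫ ω, (U i ω) ^ 4 ∂ℙ = ν := fun i =>
    ((hUident i).comp (measurable_id.pow_const 4)).integral_eq
  have hIntU2 : ∀ i, Integrable (fun ω => (U i ω) ^ 2) ℙ := fun i =>
    ((h4 i).mono_exponent (by norm_num)).integrable_sq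
  have hEq2 : ∀ i, ∫ ω, (U i ω) ^ 2 ∂ℙ = w ^ 2 := fun i =>
    (((hUident i).comp (measurable_id.pow_const 2)).integral_eq).trans hUvar
  have hIntU1 : ∀ i, Integrable (U i) ℙ := fun i =>
    memLp_one_iff_integrable.1 ((h4 i).mono_exponent (by norm_num))
  have hEq1 : ∀ i, ∫ ω, U i ω ∂ℙ = 0 := fun i => ((hUident i).integral_eq).trans hUmean
  have hIntUU : ∀ i j, Integrable (fun ω => U i ω * U j ω) ℙ := by
    intro i j
    have hg : Integrable (fun ω => (U i ω) ^ 2 + (U j ω) ^ 2) ℙ := (hIntU2 i).add (hIntU2 j)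
    refine hg.mono' (((hUmeas i).mul (hUmeas j)).aestronglyMeasurable)
      (Filter.Eventually.of_forall fun ω => ?_)
    rw [Real.norm_eq_abs]
    exact abs_le.2 ⟨by nlinarith [sq_nonneg (U i ω + U j ω)],
      by nlinarith [sq_nonneg (U i ω - U j ω)]⟩
  have hEprod : ∀ i j, i ≠ j → ∫ ω, U i ω * U j ω ∂ℙ = 0 := by
    intro i j hij
    have h := IndepFun.integral_mul_eq_mul_integral (hUindep.indepFun hij) (hIntU1 i).aestronglyMeasurable (hIntU1 j).aestronglyMeasurable
    have h2 : ∫ ω, U i ω * U j ω ∂ℙ = ∫ ω, (U i * U j) ω ∂ℙ := rfl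
    rw [h2, h, hEq1, hEq1, mul_zero]
  -- the centered differences
  set X : ℕ → Ω → ℝ := fun i ω => (U (i + 1) ω - U i ω) ^ 2 - 2 * w ^ 2 with hXdef
  have hXmeas : ∀ i, Measurable (X i) := fun i =>
    (((hUmeas (i + 1)).sub (hUmeas i)).pow_const 2).sub measurable_const
  -- pointwise bound on X i ^ 2
  have hXptsq : ∀ i ω, (X i ω) ^ 2 ≤ 16 * ((U (i + 1) ω) ^ 4 + (U i ω) ^ 4) + 8 * w ^ 4 := by
    intro i ω
    simp only [hXdef]
    set a := U (i + 1) ω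
    set b := U i ω
    nlinarith [sq_nonneg ((a - b) ^ 2 + 2 * w ^ 2), sq_nonneg (a + b), sq_nonneg (a - b),
      sq_nonneg (a ^ 2 - b ^ 2), sq_nonneg (a ^ 2 + b ^ 2), sq_nonneg (a * b), sq_nonneg w]
  have hIntDom : ∀ i, Integrable
      (fun ω => 16 * ((U (i + 1) ω) ^ 4 + (U i ω) ^ 4) + 8 * w ^ 4) ℙ := by
    intro i
    have h1 : Integrable (fun ω => (U (i + 1) ω) ^ 4 + (U i ω) ^ 4) ℙ :=
      (hInt4 (i + 1)).add (hInt4 i)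
    have h2 : Integrable (fun ω => 16 * ((U (i + 1) ω) ^ 4 + (U i ω) ^ 4)) ℙ := h1.const_mul 16
    exact h2.add (integrable_const _)
  have hIntX2 : ∀ i, Integrable (fun ω => (X i ω) ^ 2) ℙ := by
    intro i
    refine (hIntDom i).mono' (((hXmeas i).pow_const 2).aestronglyMeasurable)
      (Filter.Eventually.of_forall fun ω => ?_)
    rw [Real.norm_eq_abs, abs_of_nonneg (sq_nonneg _)]
    exact hXptsq i ω
  have hEX2le : ∀ i, ∫ ω, (X i ω) ^ 2 ∂ℙ ≤ 32 * ν + 8 * w ^ 4 := by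
    intro i
    have hmono := integral_mono (hIntX2 i) (hIntDom i) (fun ω => hXptsq i ω)
    have h1 : Integrable (fun ω => (U (i + 1) ω) ^ 4 + (U i ω) ^ 4) ℙ :=
      (hInt4 (i + 1)).add (hInt4 i)
    have h2 : Integrable (fun ω => 16 * ((U (i + 1) ω) ^ 4 + (U i ω) ^ 4)) ℙ := h1.const_mul 16
    have heq : ∫ ω, (16 * ((U (i + 1) ω) ^ 4 + (U i ω) ^ 4) + 8 * w ^ 4) ∂ℙ
        = 32 * ν + 8 * w ^ 4 := by
      rw [integral_add h2 (integrable_const _), integral_const_mul,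
        integral_add (hInt4 (i + 1)) (hInt4 i), hEq4, hEq4, integral_const]
      simp [measure_univ]
      ring
    linarith [hmono, heq.le, heq.ge]
  have hIntX : ∀ i, Integrable (X i) ℙ := by
    intro i
    have hg : Integrable (fun ω => (X i ω) ^ 2 + 1) ℙ := (hIntX2 i).add (integrable_const 1)
    refine hg.mono' (hXmeas i).aestronglyMeasurable (Filter.Eventually.of_forall fun ω => ?_)
    rw [Real.norm_eq_abs]
    nlinarith [sq_nonneg (|X i ω| - 1), abs_nonneg (X i ω), sq_abs (X i ω)]
  -- mean zero
  have hEX : ∀ i, ∫ ω, X i ω ∂ℙ = 0 := by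
    intro i
    have hrw : (fun ω => X i ω)
        = fun ω => ((U (i + 1) ω) ^ 2 - 2 * (U (i + 1) ω * U i ω) + (U i ω) ^ 2) - 2 * w ^ 2 := by
      funext ω; simp only [hXdef]; ring
    have hIab : Integrable (fun ω => 2 * (U (i + 1) ω * U i ω)) ℙ :=
      (hIntUU (i + 1) i).const_mul 2
    have hI1 : Integrable (fun ω => (U (i + 1) ω) ^ 2 - 2 * (U (i + 1) ω * U i ω)) ℙ :=
      (hIntU2 (i + 1)).sub hIab
    have hI2 : Integrable
        (fun ω => (U (i + 1) ω) ^ 2 - 2 * (U (i + 1) ω * U i ω) + (U i ω) ^ 2) ℙ :=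
      hI1.add (hIntU2 i)
    rw [hrw, integral_sub hI2 (integrable_const _), integral_add hI1 (hIntU2 i),
      integral_sub (hIntU2 (i + 1)) hIab, integral_const_mul, hEq2, hEq2,
      hEprod (i + 1) i (by omega), integral_const]
    simp [measure_univ]
    ring
  -- integrability and bounds for products
  have hprod : ∀ i j, Integrable (fun ω => X i ω * X j ω) ℙ := by
    intro i j
    have hg : Integrable (fun ω => (X i ω) ^ 2 + (X j ω) ^ 2) ℙ := (hIntX2 i).add (hIntX2 j)
    refine hg.mono' (((hXmeas i).mul (hXmeas j)).aestronglyMeasurable)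
      (Filter.Eventually.of_forall fun ω => ?_)
    rw [Real.norm_eq_abs]
    exact abs_le.2 ⟨by nlinarith [sq_nonneg (X i ω + X j ω)],
      by nlinarith [sq_nonneg (X i ω - X j ω)]⟩
  have hcovle : ∀ i j, ∫ ω, X i ω * X j ω ∂ℙ ≤ M := by
    intro i j
    have hg : Integrable (fun ω => ((X i ω) ^ 2 + (X j ω) ^ 2) / 2) ℙ :=
      ((hIntX2 i).add (hIntX2 j)).div_const 2
    have hmono := integral_mono (hprod i j) hg
      (fun ω => by have h := two_mul_le_add_sq (X i ω) (X j ω); rw [mul_assoc] at h; clear_value X; linarith)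
    have heq : ∫ ω, ((X i ω) ^ 2 + (X j ω) ^ 2) / 2 ∂ℙ
        = ((∫ ω, (X i ω) ^ 2 ∂ℙ) + ∫ ω, (X j ω) ^ 2 ∂ℙ) / 2 := by
      rw [integral_div, integral_add (hIntX2 i) (hIntX2 j)]
    have h1 := hEX2le i
    have h2 := hEX2le j
    rw [heq] at hmono
    rw [hMdef]
    linarith
  -- vanishing covariances
  have hcov0 : ∀ i j, i + 2 ≤ j → ∫ ω, X i ω * X j ω ∂ℙ = 0 := by
    intro i j hij
    have hpair := hUindep.indepFun_prodMk_prodMk hUmeas i (i + 1) j (j + 1)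
      (by omega) (by omega) (by omega) (by omega)
    have hφ : Measurable (fun p : ℝ × ℝ => (p.2 - p.1) ^ 2 - 2 * w ^ 2) := by fun_prop
    have hind : IndepFun (X i) (X j) ℙ := hpair.comp hφ hφ
    have h := IndepFun.integral_mul_eq_mul_integral hind (hIntX i).aestronglyMeasurable (hIntX j).aestronglyMeasurable
    have h2 : ∫ ω, X i ω * X j ω ∂ℙ = ∫ ω, (X i * X j) ω ∂ℙ := rfl
    rw [h2, h, hEX, hEX, mul_zero]
  -- second moment of the sum
  have hsumrw : ∀ n, (fun ω => (∑ i ∈ Finset.range n, X i ω) ^ 2)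
      = fun ω => ∑ i ∈ Finset.range n, ∑ j ∈ Finset.range n, X i ω * X j ω := by
    intro n; funext ω; rw [sq, Finset.sum_mul_sum]
  have hSint : ∀ n, Integrable (fun ω => (∑ i ∈ Finset.range n, X i ω) ^ 2) ℙ := by
    intro n
    rw [hsumrw n]
    exact integrable_finset_sum _ fun i _ => integrable_finset_sum _ fun j _ => hprod i j
  have hinner : ∀ n i, ∑ j ∈ Finset.range n, ∫ ω, X i ω * X j ω ∂ℙ ≤ 3 * M := by
    intro n i
    have hsub : ∀ j, ∫ ω, X i ω * X j ω ∂ℙ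
        ≤ if j ∈ ({i - 1, i, i + 1} : Finset ℕ) then M else 0 := by
      intro j
      by_cases hj : j ∈ ({i - 1, i, i + 1} : Finset ℕ)
      · simp only [hj, if_true]; exact hcovle i j
      · simp only [hj, if_false]
        simp only [Finset.mem_insert, Finset.mem_singleton] at hj
        push_neg at hj
        rcases le_or_gt (i + 2) j with hc | hc
        · exact le_of_eq (hcov0 i j hc)
        · have hc2 : j + 2 ≤ i := by omega
          have hcomm : ∫ ω, X i ω * X j ω ∂ℙ = ∫ ω, X j ω * X i ω ∂ℙ := by
            simp only [mul_comm]
          rw [hcomm]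
          exact le_of_eq (hcov0 j i hc2)
    calc ∑ j ∈ Finset.range n, ∫ ω, X i ω * X j ω ∂ℙ
        ≤ ∑ j ∈ Finset.range n, (if j ∈ ({i - 1, i, i + 1} : Finset ℕ) then M else 0) :=
          Finset.sum_le_sum fun j _ => hsub j
      _ = ∑ j ∈ Finset.range n ∩ ({i - 1, i, i + 1} : Finset ℕ), M := by
          rw [Finset.sum_ite_mem]
      _ ≤ 3 * M := by
          rw [Finset.sum_const, nsmul_eq_mul]
          have hcard : (Finset.range n ∩ ({i - 1, i, i + 1} : Finset ℕ)).card ≤ 3 := by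
            refine le_trans (Finset.card_le_card Finset.inter_subset_right) ?_
            refine le_trans (Finset.card_insert_le _ _) ?_
            refine Nat.succ_le_succ (le_trans (Finset.card_insert_le _ _) ?_)
            simp
          have hcard' : ((Finset.range n ∩ ({i - 1, i, i + 1} : Finset ℕ)).card : ℝ) ≤ 3 := by
            exact_mod_cast hcard
          nlinarith
  have hSbound : ∀ n, ∫ ω, (∑ i ∈ Finset.range n, X i ω) ^ 2 ∂ℙ ≤ 3 * n * M := by
    intro n
    calc ∫ ω, (∑ i ∈ Finset.range n, X i ω) ^ 2 ∂ℙ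
        = ∑ i ∈ Finset.range n, ∑ j ∈ Finset.range n, ∫ ω, X i ω * X j ω ∂ℙ := by
          rw [hsumrw n, integral_finset_sum _
            (fun i _ => integrable_finset_sum _ fun j _ => hprod i j)]
          exact Finset.sum_congr rfl fun i _ =>
            integral_finset_sum _ fun j _ => hprod i j
      _ ≤ ∑ _i ∈ Finset.range n, 3 * M := Finset.sum_le_sum fun i _ => hinner n i
      _ = 3 * n * M := by rw [Finset.sum_const, nsmul_eq_mul, Finset.card_range]; ring
  -- choose the constant
  refine ⟨max 1 (Real.sqrt (M / ε)), lt_of_lt_of_le one_pos (le_max_left _ _), ?_⟩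
  set C : ℝ := max 1 (Real.sqrt (M / ε)) with hCdef
  have hC0 : 0 < C := lt_of_lt_of_le one_pos (le_max_left _ _)
  have hMC : M ≤ ε * C ^ 2 := by
    have h1 : Real.sqrt (M / ε) ≤ C := le_max_right _ _
    have h2 : M / ε ≤ C ^ 2 := by
      have := Real.sq_sqrt (le_of_lt (div_pos hM0 hε))
      nlinarith [Real.sqrt_nonneg (M / ε)]
    calc M = ε * (M / ε) := by field_simp
      _ ≤ ε * C ^ 2 := by nlinarith
  intro n
  by_cases hn : n = 0
  · subst hn
    simp only [Nat.cast_zero, Real.sqrt_zero, zero_mul, abs_zero]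
    have hempty : {ω : Ω | C < 0} = ∅ := by
      ext ω; simp only [Set.mem_setOf_eq, Set.mem_empty_iff_false, iff_false, not_lt]
      exact hC0.le
    rw [hempty]
    simp
  · -- rewrite the statistic as a constant multiple of the centered sum
    have hn' : (n : ℝ) ≠ 0 := Nat.cast_ne_zero.2 hn
    set a : ℝ := Real.sqrt n * (2 * (n : ℝ))⁻¹ with hadef
    have hx : (2 * (n : ℝ))⁻¹ * ((n : ℝ) * (2 * w ^ 2)) = w ^ 2 := by
      field_simp
    have key : ∀ ω, Real.sqrt n *
        ((2 * (n : ℝ))⁻¹ * ∑ i ∈ Finset.range n, (U (i + 1) ω - U i ω) ^ 2 - w ^ 2)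
        = a * ∑ i ∈ Finset.range n, X i ω := by
      intro ω
      have hT : (∑ i ∈ Finset.range n, X i ω)
          = (∑ i ∈ Finset.range n, (U (i + 1) ω - U i ω) ^ 2) - n * (2 * w ^ 2) := by
        simp only [hXdef, Finset.sum_sub_distrib, Finset.sum_const, Finset.card_range,
          nsmul_eq_mul]
      rw [hT, hadef]
      conv_lhs => rw [← hx]
      ring
    have ha2 : a ^ 2 = (4 * (n : ℝ))⁻¹ := by
      rw [hadef, mul_pow, Real.sq_sqrt (Nat.cast_nonneg n)]
      field_simp
      ring
    have ha2nn : (0:ℝ) ≤ a ^ 2 := sq_nonneg a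
    -- integral bound for the squared statistic
    have hY2int : Integrable (fun ω => (a * ∑ i ∈ Finset.range n, X i ω) ^ 2) ℙ := by
      have h := (hSint n).const_mul (a ^ 2)
      refine h.congr (Filter.Eventually.of_forall fun ω => ?_)
      show a ^ 2 * (∑ i ∈ Finset.range n, X i ω) ^ 2 = (a * ∑ i ∈ Finset.range n, X i ω) ^ 2
      ring
    have hY2bound : ∫ ω, (a * ∑ i ∈ Finset.range n, X i ω) ^ 2 ∂ℙ ≤ M := by
      have hrw : (fun ω => (a * ∑ i ∈ Finset.range n, X i ω) ^ 2)
          = fun ω => a ^ 2 * (∑ i ∈ Finset.range n, X i ω) ^ 2 := by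
        funext ω; ring
      rw [hrw, integral_const_mul]
      have h1 : a ^ 2 * ∫ ω, (∑ i ∈ Finset.range n, X i ω) ^ 2 ∂ℙ ≤ a ^ 2 * (3 * n * M) :=
        mul_le_mul_of_nonneg_left (hSbound n) ha2nn
      have h2 : a ^ 2 * (3 * n * M) ≤ M := by
        rw [ha2]
        have hnpos : (0:ℝ) < n := by positivity
        have h3 : (4 * (n : ℝ))⁻¹ * (3 * n * M) = (3 / 4) * M := by
          field_simp
        rw [h3]; nlinarith
      linarith
    -- Markov's inequality
    have hmar := mul_meas_ge_le_integral_of_nonneg (μ := ℙ)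
      (f := fun ω => (a * ∑ i ∈ Finset.range n, X i ω) ^ 2)
      (Filter.Eventually.of_forall fun ω => sq_nonneg _) hY2int (C ^ 2)
    have hsubset : {ω : Ω | C < |Real.sqrt n *
        ((2 * (n : ℝ))⁻¹ * ∑ i ∈ Finset.range n, (U (i + 1) ω - U i ω) ^ 2 - w ^ 2)|}
        ⊆ {ω : Ω | C ^ 2 ≤ (a * ∑ i ∈ Finset.range n, X i ω) ^ 2} := by
      intro ω hω
      simp only [Set.mem_setOf_eq] at hω ⊢
      rw [key ω] at hω
      nlinarith [abs_nonneg (a * ∑ i ∈ Finset.range n, X i ω),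
        sq_abs (a * ∑ i ∈ Finset.range n, X i ω)]
    refine le_trans (measure_mono hsubset) ?_
    rw [ENNReal.le_ofReal_iff_toReal_le (measure_ne_top _ _) hε.le]
    have hC2 : (0:ℝ) < C ^ 2 := by positivity
    have htoReal : C ^ 2 * (ℙ {ω : Ω | C ^ 2 ≤ (a * ∑ i ∈ Finset.range n, X i ω) ^ 2}).toReal
        ≤ M := le_trans hmar hY2bound
    nlinarith [ENNReal.toReal_nonneg
      (a := ℙ {ω : Ω | C ^ 2 ≤ (a * ∑ i ∈ Finset.range n, X i ω) ^ 2})]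
end

section
/- For each n ∈ ℕ let M_n ∈ ℕ, let (𝒢_{n,m})_{0≤m≤M_n} be a filtration (an increasing family of sub-σ-algebras) on a probability space, and let γ_{n,m} (1 ≤ m ≤ M_n) be square-integrable real random variables such that γ_{n,m} is 𝒢_{n,m}-measurable. If Σ_{m=1}^{M_n} E[γ_{n,m}² | 𝒢_{n,m−1}] → 0 in probability as n → ∞, then Σ_{m=1}^{M_n} (γ_{n,m} − E[γ_{n,m} | 𝒢_{n,m−1}]) → 0 in probability as n → ∞. -/
open MeasureTheory ProbabilityTheory Filter

lemma my_int_mul {α : Type*} {m0 : MeasurableSpace α} {μ : Measure α} {f g : α → ℝ}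
    (hf : MemLp f 2 μ) (hg : MemLp g 2 μ) :
    Integrable (fun ω => f ω * g ω) μ := by
  have hint : Integrable (fun ω => (f ω ^ 2 + g ω ^ 2) / 2) μ :=
    (hf.integrable_sq.add hg.integrable_sq).div_const 2
  refine hint.mono' (hf.aestronglyMeasurable.mul hg.aestronglyMeasurable)
    (Filter.Eventually.of_forall fun ω => ?_)
  have h1 : ‖f ω * g ω‖ = |f ω| * |g ω| := abs_mul _ _
  rw [h1]
  nlinarith [sq_nonneg (|f ω| - |g ω|), sq_abs (f ω), sq_abs (g ω),
    abs_nonneg (f ω), abs_nonneg (g ω)]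

lemma my_memℒp_condexp {α : Type*} {m m0 : MeasurableSpace α} {μ : Measure α}
    [IsFiniteMeasure μ] (hm : m ≤ m0) {f : α → ℝ} (hf : MemLp f 2 μ) :
    MemLp (μ[f|m]) 2 μ := by
  set F : Lp ℝ 2 μ := hf.toLp f with hF
  set g : Lp ℝ 2 μ := (condExpL2 ℝ ℝ hm F : Lp ℝ 2 μ) with hg
  have hgm : MemLp (g : α → ℝ) 2 μ := Lp.memLp g
  have heq : (g : α → ℝ) =ᵐ[μ] μ[f|m] := by
    refine ae_eq_condExp_of_forall_setIntegral_eq hm (hf.integrable one_le_two)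
      (fun s _ _ => (hgm.integrable one_le_two).integrableOn) (fun s hs hμs => ?_)
      (aestronglyMeasurable_condExpL2 hm F)
    rw [integral_condExpL2_eq hm F hs hμs.ne]
    exact setIntegral_congr_ae (hm s hs) ((hf.coeFn_toLp).mono fun ω h _ => h)
  exact hgm.ae_eq heq

lemma my_tele (δ : ℝ) (hδ : 0 ≤ δ) (M : ℕ) (a : ℕ → ℝ) (ha : ∀ k, k ≤ M → 0 ≤ a k) :
    ∑ m ∈ Finset.Icc 1 M, (if (∑ k ∈ Finset.Icc 1 m, a k) ≤ δ then a m else 0) ≤ δ := by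
  induction M with
  | zero => simpa using hδ
  | succ M ih =>
    rw [Finset.sum_Icc_succ_top (Nat.succ_le_succ (Nat.zero_le M))]
    by_cases h : (∑ k ∈ Finset.Icc 1 (M + 1), a k) ≤ δ
    · rw [if_pos h]
      have hcongr : ∀ m ∈ Finset.Icc 1 M,
          (if (∑ k ∈ Finset.Icc 1 m, a k) ≤ δ then a m else 0) = a m := by
        intro m hm
        rw [if_pos]
        refine le_trans (Finset.sum_le_sum_of_subset_of_nonneg ?_ ?_) h
        · apply Finset.Icc_subset_Icc_right
          simp at hm; omega
        · intro k hk _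
          simp at hk; exact ha k (by omega)
      rw [Finset.sum_congr rfl hcongr,
        ← Finset.sum_Icc_succ_top (Nat.succ_le_succ (Nat.zero_le M))]
      exact h
    · rw [if_neg h, add_zero]
      exact ih (fun k hk => ha k (by omega))

lemma my_key {Ω : Type*} [m0 : MeasureSpace Ω] [IsProbabilityMeasure (ℙ : Measure Ω)]
    (M : ℕ) (G : ℕ → MeasurableSpace Ω)
    (hGle : ∀ m, m ≤ M → G m ≤ (inferInstance : MeasurableSpace Ω))
    (hGmono : ∀ m m' : ℕ, m ≤ m' → m' ≤ M → G m ≤ G m')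
    (γ : ℕ → Ω → ℝ)
    (hL2 : ∀ m, 1 ≤ m → m ≤ M → MemLp (γ m) 2 ℙ)
    (hadapted : ∀ m, 1 ≤ m → m ≤ M → Measurable[G m] (γ m))
    {δ ε : ℝ} (hδ : 0 < δ) (hε : 0 < ε) :
    (ℙ : Measure Ω) {ω | ε ≤ |∑ m ∈ Finset.Icc 1 M,
        (γ m ω - condExp (G (m-1)) ℙ (γ m) ω)|}
      ≤ ℙ {ω | δ ≤ |∑ m ∈ Finset.Icc 1 M,
          condExp (G (m-1)) ℙ (fun ω' => (γ m ω') ^ 2) ω|}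
        + ENNReal.ofReal (δ / ε ^ 2) := by
  -- abbreviations
  set c : ℕ → Ω → ℝ := fun m => condExp (G (m-1)) ℙ (fun ω' => (γ m ω') ^ 2) with hc
  set e : ℕ → Ω → ℝ := fun m => condExp (G (m-1)) ℙ (γ m) with he
  set X : ℕ → Ω → ℝ := fun m ω => γ m ω - e m ω with hX
  set A : ℕ → Ω → ℝ := fun m ω => ∑ k ∈ Finset.Icc 1 m, c k ω with hA
  set χ : ℕ → Ω → ℝ := fun m ω => if A m ω ≤ δ then 1 else 0 with hχ
  set T : ℕ → Ω → ℝ := fun j ω => ∑ m ∈ Finset.Icc 1 j, χ m ω * X m ω with hT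
  -- basic facts
  have hGle' : ∀ m, m ≤ M → G (m-1) ≤ (inferInstance : MeasurableSpace Ω) :=
    fun m hm => hGle (m-1) (le_trans (Nat.sub_le m 1) hm)
  have he2 : ∀ m, 1 ≤ m → m ≤ M → MemLp (e m) 2 ℙ :=
    fun m h1 h2 => my_memℒp_condexp (hGle' m h2) (hL2 m h1 h2)
  have hX2 : ∀ m, 1 ≤ m → m ≤ M → MemLp (X m) 2 ℙ :=
    fun m h1 h2 => (hL2 m h1 h2).sub (he2 m h1 h2)
  have hci : ∀ m, Integrable (c m) ℙ := fun m => integrable_condExp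
  have hei : ∀ m, Integrable (e m) ℙ := fun m => integrable_condExp
  have hχ01 : ∀ m ω, χ m ω = 0 ∨ χ m ω = 1 := by
    intro m ω; by_cases h : A m ω ≤ δ <;> simp [hχ, h]
  have hχ_nonneg : ∀ m ω, 0 ≤ χ m ω := by
    intro m ω; rcases hχ01 m ω with h | h <;> rw [h] <;> norm_num
  have hχ_le : ∀ m ω, ‖χ m ω‖ ≤ 1 := by
    intro m ω; rcases hχ01 m ω with h | h <;> rw [h] <;> simp
  have hχsq : ∀ m ω, χ m ω ^ 2 = χ m ω := by
    intro m ω; rcases hχ01 m ω with h | h <;> rw [h] <;> norm_num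
  -- strong measurability
  have hASM : ∀ m, 1 ≤ m → m ≤ M → StronglyMeasurable[G (m-1)] (A m) := by
    intro m h1 h2
    apply Finset.stronglyMeasurable_fun_sum
    intro k hk
    simp only [Finset.mem_Icc] at hk
    exact (stronglyMeasurable_condExp).mono
      (hGmono (k-1) (m-1) (by omega) (le_trans (Nat.sub_le m 1) h2))
  have hχSM : ∀ m, 1 ≤ m → m ≤ M → StronglyMeasurable[G (m-1)] (χ m) := by
    intro m h1 h2
    have hset : MeasurableSet[G (m-1)] {ω | A m ω ≤ δ} :=
      measurableSet_le (hASM m h1 h2).measurable measurable_const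
    exact (Measurable.ite hset measurable_const measurable_const).stronglyMeasurable
  have hXSM : ∀ m, 1 ≤ m → m ≤ M → StronglyMeasurable[G m] (X m) := by
    intro m h1 h2
    exact ((hadapted m h1 h2).stronglyMeasurable).sub
      ((stronglyMeasurable_condExp).mono (hGmono (m-1) m (Nat.sub_le m 1) h2))
  have hχX2 : ∀ m, 1 ≤ m → m ≤ M → MemLp (fun ω => χ m ω * X m ω) 2 ℙ := by
    intro m h1 h2
    refine MemLp.of_le (hX2 m h1 h2)
      (((hχSM m h1 h2).mono (hGle' m h2)).aestronglyMeasurable.mul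
        (hX2 m h1 h2).aestronglyMeasurable)
      (Filter.Eventually.of_forall fun ω => ?_)
    have : ‖χ m ω * X m ω‖ = ‖χ m ω‖ * ‖X m ω‖ := norm_mul _ _
    rw [this]
    calc ‖χ m ω‖ * ‖X m ω‖ ≤ 1 * ‖X m ω‖ :=
          mul_le_mul_of_nonneg_right (hχ_le m ω) (norm_nonneg _)
      _ = ‖X m ω‖ := one_mul _
  have hT2 : ∀ j, j ≤ M → MemLp (T j) 2 ℙ := by
    intro j hj
    refine memLp_finsetSum _ (fun m hm => ?_)
    simp only [Finset.mem_Icc] at hm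
    exact hχX2 m hm.1 (le_trans hm.2 hj)
  have hTSM : ∀ j, j ≤ M → StronglyMeasurable[G j] (T j) := by
    intro j hj
    apply Finset.stronglyMeasurable_fun_sum
    intro m hm
    simp only [Finset.mem_Icc] at hm
    exact (((hχSM m hm.1 (le_trans hm.2 hj)).mono
        (hGmono (m-1) j (by omega) hj)).mul
      ((hXSM m hm.1 (le_trans hm.2 hj)).mono (hGmono m j hm.2 hj)))
  -- integrability of χ * c
  have hIχc : ∀ m, 1 ≤ m → m ≤ M → Integrable (fun ω => χ m ω * c m ω) ℙ := by
    intro m h1 h2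
    exact (hci m).bdd_mul
      (((hχSM m h1 h2).mono (hGle' m h2)).aestronglyMeasurable) (Filter.Eventually.of_forall (hχ_le m))
  -- main induction: second moment bound
  have main : ∀ j, j ≤ M →
      ∫ ω, (T j ω)^2 ∂ℙ ≤ ∫ ω, (∑ m ∈ Finset.Icc 1 j, χ m ω * c m ω) ∂ℙ := by
    intro j
    induction j with
    | zero => intro _; simp [hT]
    | succ j ih =>
      intro hj1
      have hj : j ≤ M := by omega
      have h1j : 1 ≤ j + 1 := by omega
      have hmm : G ((j+1)-1) ≤ (inferInstance : MeasurableSpace Ω) := hGle' (j+1) hj1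
      have hγ2 : MemLp (γ (j+1)) 2 ℙ := hL2 (j+1) h1j hj1
      have hXj : MemLp (X (j+1)) 2 ℙ := hX2 (j+1) h1j hj1
      have hχXj : MemLp (fun ω => χ (j+1) ω * X (j+1) ω) 2 ℙ := hχX2 (j+1) h1j hj1
      have hTj2 : MemLp (T j) 2 ℙ := hT2 j hj
      have hEj2 : MemLp (e (j+1)) 2 ℙ := he2 (j+1) h1j hj1
      have hγe : condExp (G ((j+1)-1)) ℙ (γ (j+1)) = e (j+1) := rfl
      have hγc : condExp (G ((j+1)-1)) ℙ (fun ω' => (γ (j+1) ω') ^ 2) = c (j+1) := rfl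
      have hχaesm : AEStronglyMeasurable (χ (j+1)) ℙ :=
        ((hχSM (j+1) h1j hj1).mono hmm).aestronglyMeasurable
      have hTsucc : ∀ ω, T (j+1) ω = T j ω + χ (j+1) ω * X (j+1) ω := by
        intro ω
        simp only [hT]
        rw [Finset.sum_Icc_succ_top (show 1 ≤ j + 1 by omega)]
      -- cross term is zero
      have hcross : ∫ ω, T j ω * (χ (j+1) ω * X (j+1) ω) ∂ℙ = 0 := by
        have hSMh : StronglyMeasurable[G ((j+1)-1)] (fun ω => T j ω * χ (j+1) ω) :=
          ((hTSM j hj).mono (hGmono j ((j+1)-1) (by omega)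
            (le_trans (Nat.sub_le _ _) hj1))).mul (hχSM (j+1) h1j hj1)
        have hint_hX : Integrable (fun ω => (T j ω * χ (j+1) ω) * X (j+1) ω) ℙ :=
          (my_int_mul hTj2 hχXj).congr (Filter.Eventually.of_forall fun ω => by ring)
        have hXint : Integrable (X (j+1)) ℙ := hXj.integrable one_le_two
        have pull := condExp_mul_of_stronglyMeasurable_left (μ := ℙ)
          (m := G ((j+1)-1)) hSMh hint_hX hXint
        have hcondX : condExp (G ((j+1)-1)) ℙ (X (j+1)) =ᵐ[ℙ] 0 := by
          have hsub := condExp_sub (m := G ((j+1)-1)) (μ := ℙ)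
            (hγ2.integrable one_le_two) (hei (j+1))
          have hee : condExp (G ((j+1)-1)) ℙ (e (j+1)) = e (j+1) :=
            condExp_of_stronglyMeasurable hmm stronglyMeasurable_condExp (hei (j+1))
          refine hsub.trans ?_
          rw [hγe, hee, sub_self]
        have hzero : condExp (G ((j+1)-1)) ℙ
            ((fun ω => T j ω * χ (j+1) ω) * X (j+1)) =ᵐ[ℙ] 0 := by
          refine pull.trans ?_
          filter_upwards [hcondX] with ω hω
          simp only [Pi.mul_apply, Pi.zero_apply] at hω ⊢
          rw [hω, mul_zero]
        calc ∫ ω, T j ω * (χ (j+1) ω * X (j+1) ω) ∂ℙ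
            = ∫ ω, ((fun ω => T j ω * χ (j+1) ω) * X (j+1)) ω ∂ℙ := by
              refine integral_congr_ae (Filter.Eventually.of_forall fun ω => ?_)
              simp only [Pi.mul_apply]; ring
          _ = ∫ ω, condExp (G ((j+1)-1)) ℙ
                ((fun ω => T j ω * χ (j+1) ω) * X (j+1)) ω ∂ℙ :=
              (integral_condExp hmm).symm
          _ = ∫ ω, (0 : Ω → ℝ) ω ∂ℙ := integral_congr_ae hzero
          _ = 0 := by simp
      -- variance term
      have hvar : ∫ ω, (χ (j+1) ω * X (j+1) ω)^2 ∂ℙ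
          ≤ ∫ ω, χ (j+1) ω * c (j+1) ω ∂ℙ := by
        have hκE2 : MemLp (fun ω => χ (j+1) ω * e (j+1) ω) 2 ℙ := by
          refine MemLp.of_le hEj2 (hχaesm.mul hEj2.aestronglyMeasurable)
            (Filter.Eventually.of_forall fun ω => ?_)
          rw [norm_mul]
          calc ‖χ (j+1) ω‖ * ‖e (j+1) ω‖ ≤ 1 * ‖e (j+1) ω‖ :=
                mul_le_mul_of_nonneg_right (hχ_le (j+1) ω) (norm_nonneg _)
            _ = ‖e (j+1) ω‖ := one_mul _
        have hIg2 : Integrable (fun ω => χ (j+1) ω * (γ (j+1) ω)^2) ℙ :=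
          hγ2.integrable_sq.bdd_mul hχaesm (Filter.Eventually.of_forall (hχ_le (j+1)))
        have hIEg : Integrable (fun ω => (χ (j+1) ω * e (j+1) ω) * γ (j+1) ω) ℙ :=
          my_int_mul hκE2 hγ2
        have hIE2 : Integrable (fun ω => χ (j+1) ω * (e (j+1) ω)^2) ℙ :=
          hEj2.integrable_sq.bdd_mul hχaesm (Filter.Eventually.of_forall (hχ_le (j+1)))
        have hIC : Integrable (fun ω => χ (j+1) ω * c (j+1) ω) ℙ := hIχc (j+1) h1j hj1
        -- pull-out 1 : ∫ (χ e) γ = ∫ χ e²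
        have hSM1 : StronglyMeasurable[G ((j+1)-1)] (fun ω => χ (j+1) ω * e (j+1) ω) :=
          (hχSM (j+1) h1j hj1).mul stronglyMeasurable_condExp
        have pull1 := condExp_mul_of_stronglyMeasurable_left (μ := ℙ) (m := G ((j+1)-1))
          hSM1 hIEg (hγ2.integrable one_le_two)
        have heq1 : ∫ ω, (χ (j+1) ω * e (j+1) ω) * γ (j+1) ω ∂ℙ
            = ∫ ω, χ (j+1) ω * (e (j+1) ω)^2 ∂ℙ := by
          calc ∫ ω, (χ (j+1) ω * e (j+1) ω) * γ (j+1) ω ∂ℙ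
              = ∫ ω, ((fun ω => χ (j+1) ω * e (j+1) ω) * γ (j+1)) ω ∂ℙ := rfl
            _ = ∫ ω, condExp (G ((j+1)-1)) ℙ
                  ((fun ω => χ (j+1) ω * e (j+1) ω) * γ (j+1)) ω ∂ℙ :=
                (integral_condExp hmm).symm
            _ = ∫ ω, χ (j+1) ω * (e (j+1) ω)^2 ∂ℙ := by
                refine integral_congr_ae (pull1.trans ?_)
                refine Filter.Eventually.of_forall fun ω => ?_
                simp only [Pi.mul_apply, hγe]
                ring
        -- pull-out 2 : ∫ χ γ² = ∫ χ c
        have pull2 := condExp_mul_of_stronglyMeasurable_left (μ := ℙ) (m := G ((j+1)-1))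
          (hχSM (j+1) h1j hj1) hIg2 hγ2.integrable_sq
        have heq2 : ∫ ω, χ (j+1) ω * (γ (j+1) ω)^2 ∂ℙ
            = ∫ ω, χ (j+1) ω * c (j+1) ω ∂ℙ := by
          calc ∫ ω, χ (j+1) ω * (γ (j+1) ω)^2 ∂ℙ
              = ∫ ω, (χ (j+1) * fun ω => (γ (j+1) ω)^2) ω ∂ℙ := rfl
            _ = ∫ ω, condExp (G ((j+1)-1)) ℙ
                  (χ (j+1) * fun ω => (γ (j+1) ω)^2) ω ∂ℙ :=
                (integral_condExp hmm).symm
            _ = ∫ ω, χ (j+1) ω * c (j+1) ω ∂ℙ := by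
                refine integral_congr_ae (pull2.trans ?_)
                refine Filter.Eventually.of_forall fun ω => ?_
                simp only [Pi.mul_apply, hγc]
        -- expand the square
        have hsq_eq : ∀ ω, (χ (j+1) ω * X (j+1) ω)^2
            = χ (j+1) ω * (γ (j+1) ω)^2 - 2*((χ (j+1) ω * e (j+1) ω) * γ (j+1) ω)
              + χ (j+1) ω * (e (j+1) ω)^2 := by
          intro ω
          have h := hχsq (j+1) ω
          have hXd : X (j+1) ω = γ (j+1) ω - e (j+1) ω := rfl
          rw [hXd]
          linear_combination (γ (j+1) ω - e (j+1) ω)^2 * h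
        have hE2nonneg : 0 ≤ ∫ ω, χ (j+1) ω * (e (j+1) ω)^2 ∂ℙ :=
          integral_nonneg fun ω => mul_nonneg (hχ_nonneg (j+1) ω) (sq_nonneg _)
        calc ∫ ω, (χ (j+1) ω * X (j+1) ω)^2 ∂ℙ
            = ∫ ω, (χ (j+1) ω * (γ (j+1) ω)^2
                - 2*((χ (j+1) ω * e (j+1) ω) * γ (j+1) ω)
                + χ (j+1) ω * (e (j+1) ω)^2) ∂ℙ :=
              integral_congr_ae (Filter.Eventually.of_forall hsq_eq)
          _ = (∫ ω, χ (j+1) ω * (γ (j+1) ω)^2 ∂ℙ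
                - ∫ ω, 2*((χ (j+1) ω * e (j+1) ω) * γ (j+1) ω) ∂ℙ)
                + ∫ ω, χ (j+1) ω * (e (j+1) ω)^2 ∂ℙ := by
              have h12 : Integrable (fun ω => χ (j+1) ω * (γ (j+1) ω)^2
                  - 2*((χ (j+1) ω * e (j+1) ω) * γ (j+1) ω)) ℙ :=
                hIg2.sub (hIEg.const_mul 2)
              rw [integral_add h12 hIE2, integral_sub hIg2 (hIEg.const_mul 2)]
          _ = (∫ ω, χ (j+1) ω * (γ (j+1) ω)^2 ∂ℙ
                - 2 * ∫ ω, (χ (j+1) ω * e (j+1) ω) * γ (j+1) ω ∂ℙ)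
                + ∫ ω, χ (j+1) ω * (e (j+1) ω)^2 ∂ℙ := by
              rw [integral_const_mul]
          _ = ∫ ω, χ (j+1) ω * c (j+1) ω ∂ℙ - ∫ ω, χ (j+1) ω * (e (j+1) ω)^2 ∂ℙ := by
              rw [heq1, heq2]; ring
          _ ≤ ∫ ω, χ (j+1) ω * c (j+1) ω ∂ℙ := by linarith
      -- combine
      have hIκX : Integrable (fun ω => T j ω * (χ (j+1) ω * X (j+1) ω)) ℙ :=
        my_int_mul hTj2 hχXj
      have hexp : ∫ ω, (T (j+1) ω)^2 ∂ℙ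
          = ∫ ω, (T j ω)^2 ∂ℙ + 2 * ∫ ω, T j ω * (χ (j+1) ω * X (j+1) ω) ∂ℙ
            + ∫ ω, (χ (j+1) ω * X (j+1) ω)^2 ∂ℙ := by
        calc ∫ ω, (T (j+1) ω)^2 ∂ℙ
            = ∫ ω, ((T j ω)^2 + 2*(T j ω * (χ (j+1) ω * X (j+1) ω))
                + (χ (j+1) ω * X (j+1) ω)^2) ∂ℙ := by
              refine integral_congr_ae (Filter.Eventually.of_forall fun ω => ?_)
              simp only [hTsucc]; ring
          _ = _ := by
              have h12 : Integrable (fun ω => (T j ω)^2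
                  + 2*(T j ω * (χ (j+1) ω * X (j+1) ω))) ℙ :=
                hTj2.integrable_sq.add (hIκX.const_mul 2)
              rw [integral_add h12 hχXj.integrable_sq,
                integral_add hTj2.integrable_sq (hIκX.const_mul 2),
                integral_const_mul]
      have hRHS : ∫ ω, (∑ m ∈ Finset.Icc 1 (j+1), χ m ω * c m ω) ∂ℙ
          = ∫ ω, (∑ m ∈ Finset.Icc 1 j, χ m ω * c m ω) ∂ℙ
            + ∫ ω, χ (j+1) ω * c (j+1) ω ∂ℙ := by
        rw [← integral_add (integrable_finset_sum _ (fun m hm => by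
            simp only [Finset.mem_Icc] at hm
            exact hIχc m hm.1 (le_trans hm.2 hj))) (hIχc (j+1) h1j hj1)]
        refine integral_congr_ae (Filter.Eventually.of_forall fun ω => ?_)
        simp only
        rw [Finset.sum_Icc_succ_top (show 1 ≤ j + 1 by omega)]
      rw [hexp, hcross, hRHS, mul_zero, add_zero]
      exact add_le_add (ih hj) hvar
  -- a.e. nonnegativity of c
  have hc0 : ∀ᵐ ω ∂(ℙ : Measure Ω), ∀ m, 0 ≤ c m ω :=
    ae_all_iff.mpr fun m => condExp_nonneg (Filter.Eventually.of_forall fun ω => sq_nonneg _)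
  have hsum_int : Integrable (fun ω => ∑ m ∈ Finset.Icc 1 M, χ m ω * c m ω) ℙ :=
    integrable_finset_sum _ (fun m hm => by
      simp only [Finset.mem_Icc] at hm; exact hIχc m hm.1 hm.2)
  have hsum_le : ∫ ω, (∑ m ∈ Finset.Icc 1 M, χ m ω * c m ω) ∂ℙ ≤ δ := by
    have hae : ∀ᵐ ω ∂(ℙ : Measure Ω), (∑ m ∈ Finset.Icc 1 M, χ m ω * c m ω) ≤ δ := by
      filter_upwards [hc0] with ω h0
      have htele := my_tele δ hδ.le M (fun k => c k ω) (fun k _ => h0 k)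
      have heq : ∑ m ∈ Finset.Icc 1 M, χ m ω * c m ω
          = ∑ m ∈ Finset.Icc 1 M,
            (if (∑ k ∈ Finset.Icc 1 m, (fun k => c k ω) k) ≤ δ then (fun k => c k ω) m else 0) := by
        refine Finset.sum_congr rfl fun m _ => ?_
        by_cases h : A m ω ≤ δ
        · simp only [hχ, if_pos h, one_mul]; exact (if_pos h).symm
        · simp only [hχ, if_neg h, zero_mul]; exact (if_neg h).symm
      rw [heq]
      exact htele
    calc ∫ ω, (∑ m ∈ Finset.Icc 1 M, χ m ω * c m ω) ∂ℙ
        ≤ ∫ _ω, δ ∂(ℙ : Measure Ω) := integral_mono_ae hsum_int (integrable_const δ) hae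
      _ = δ := by simp
  have hTbound : ∫ ω, (T M ω)^2 ∂ℙ ≤ δ := le_trans (main M le_rfl) hsum_le
  -- Chebyshev
  have hcheb : (ℙ : Measure Ω) {ω | ε ≤ |T M ω|} ≤ ENNReal.ofReal (δ / ε^2) := by
    have hsubset : {ω | ε ≤ |T M ω|} ⊆ {ω | ε^2 ≤ (T M ω)^2} := by
      intro ω h
      simp only [Set.mem_setOf_eq] at h ⊢
      calc ε^2 ≤ |T M ω|^2 := pow_le_pow_left₀ hε.le h 2
        _ = (T M ω)^2 := sq_abs _
    have hmark := mul_meas_ge_le_integral_of_nonneg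
      (f := fun ω => (T M ω)^2) (μ := (ℙ : Measure Ω))
      (Filter.Eventually.of_forall fun ω => sq_nonneg _)
      (hT2 M le_rfl).integrable_sq (ε^2)
    have hε2 : (0:ℝ) < ε^2 := by positivity
    have htoReal : ((ℙ : Measure Ω) {ω | ε^2 ≤ (T M ω)^2}).toReal ≤ δ / ε^2 := by
      rw [le_div_iff₀ hε2]
      rw [measureReal_def] at hmark
      nlinarith [hmark, hTbound]
    calc (ℙ : Measure Ω) {ω | ε ≤ |T M ω|}
        ≤ ℙ {ω | ε^2 ≤ (T M ω)^2} := measure_mono hsubset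
      _ = ENNReal.ofReal (((ℙ : Measure Ω) {ω | ε^2 ≤ (T M ω)^2}).toReal) :=
          (ENNReal.ofReal_toReal (measure_ne_top _ _)).symm
      _ ≤ ENNReal.ofReal (δ / ε^2) := ENNReal.ofReal_le_ofReal htoReal
  -- event inclusion
  have hsub : ∀ᵐ ω ∂(ℙ : Measure Ω),
      ω ∈ {ω | ε ≤ |∑ m ∈ Finset.Icc 1 M, (γ m ω - e m ω)|} →
      ω ∈ ({ω | δ ≤ |A M ω|} ∪ {ω | ε ≤ |T M ω|}) := by
    filter_upwards [hc0] with ω h0 hS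
    by_cases hAδ : A M ω ≤ δ
    · right
      simp only [Set.mem_setOf_eq] at hS ⊢
      have hTS : T M ω = ∑ m ∈ Finset.Icc 1 M, (γ m ω - e m ω) := by
        simp only [hT]
        refine Finset.sum_congr rfl fun m hm => ?_
        simp only [Finset.mem_Icc] at hm
        have hAm : A m ω ≤ δ := by
          refine le_trans ?_ hAδ
          refine Finset.sum_le_sum_of_subset_of_nonneg
            (Finset.Icc_subset_Icc_right hm.2) (fun k _ _ => h0 k)
        have h1 : χ m ω = 1 := by simp only [hχ, if_pos hAm]
        rw [h1, one_mul]
      rw [hTS]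
      exact hS
    · left
      simp only [Set.mem_setOf_eq]
      exact le_trans (le_of_lt (lt_of_not_ge hAδ)) (le_abs_self _)
  -- final computation
  show (ℙ : Measure Ω) {ω | ε ≤ |∑ m ∈ Finset.Icc 1 M, (γ m ω - e m ω)|}
      ≤ ℙ {ω | δ ≤ |A M ω|} + ENNReal.ofReal (δ / ε ^ 2)
  calc (ℙ : Measure Ω) {ω | ε ≤ |∑ m ∈ Finset.Icc 1 M, (γ m ω - e m ω)|}
      ≤ ℙ ({ω | δ ≤ |A M ω|} ∪ {ω | ε ≤ |T M ω|}) := measure_mono_ae hsub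
    _ ≤ ℙ {ω | δ ≤ |A M ω|} + ℙ {ω | ε ≤ |T M ω|} := measure_union_le _ _
    _ ≤ ℙ {ω | δ ≤ |A M ω|} + ENNReal.ofReal (δ / ε ^ 2) := add_le_add le_rfl hcheb

/-- **A Lenglart-type lemma.** If `γ_{n,m}` is square-integrable and
`𝒢_{n,m}`-measurable for a filtration `(𝒢_{n,m})_{0 ≤ m ≤ M_n}`, and the sums of
conditional second moments `∑_{m=1}^{M_n} E[γ_{n,m}² | 𝒢_{n,m-1}]` tend to zero in
probability, then the martingale-difference sums
`∑_{m=1}^{M_n} (γ_{n,m} - E[γ_{n,m} | 𝒢_{n,m-1}])` tend to zero in probability. -/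
theorem lenglart_conditional_second_moment_criterion
    {Ω : Type*} [m0 : MeasureSpace Ω] [IsProbabilityMeasure (ℙ : Measure Ω)]
    (M : ℕ → ℕ) (G : ℕ → ℕ → MeasurableSpace Ω)
    (hGle : ∀ n m, m ≤ M n → G n m ≤ (inferInstance : MeasurableSpace Ω))
    (hGmono : ∀ n, ∀ m m' : ℕ, m ≤ m' → m' ≤ M n → G n m ≤ G n m')
    (γ : ℕ → ℕ → Ω → ℝ)
    (hL2 : ∀ n m, 1 ≤ m → m ≤ M n → MemLp (γ n m) 2 ℙ)
    (hadapted : ∀ n m, 1 ≤ m → m ≤ M n → Measurable[G n m] (γ n m))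
    (hcond : TendstoInMeasure ℙ
      (fun (n : ℕ) (ω : Ω) => ∑ m ∈ Finset.Icc 1 (M n),
        condExp (G n (m - 1)) ℙ (fun ω' => (γ n m ω') ^ 2) ω)
      atTop (fun _ => (0 : ℝ))) :
    TendstoInMeasure ℙ
      (fun (n : ℕ) (ω : Ω) => ∑ m ∈ Finset.Icc 1 (M n),
        (γ n m ω - condExp (G n (m - 1)) ℙ (γ n m) ω))
      atTop (fun _ => (0 : ℝ)) := by
  refine tendstoInMeasure_iff_dist.mpr fun ε hε => ?_
  rw [ENNReal.tendsto_atTop_zero]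
  intro η hη
  set η' : ENNReal := min η 1 with hη'
  have hη'pos : 0 < η' := lt_min hη zero_lt_one
  have hη'top : η' ≠ ⊤ := ne_top_of_le_ne_top ENNReal.one_ne_top (min_le_right _ _)
  set r : ℝ := η'.toReal / 2 with hr_def
  have hr : 0 < r := by
    have := ENNReal.toReal_pos hη'pos.ne' hη'top
    positivity
  set δ : ℝ := r * ε^2 with hδ_def
  have hδ : 0 < δ := by positivity
  have h1 := tendstoInMeasure_iff_dist.mp hcond δ hδ
  obtain ⟨N, hN⟩ := ENNReal.tendsto_atTop_zero.mp h1 (η'/2)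
    (ENNReal.div_pos hη'pos.ne' (by norm_num))
  refine ⟨N, fun n hn => ?_⟩
  have hkey := my_key (M n) (G n) (fun m hm => hGle n m hm)
    (fun m m' h h' => hGmono n m m' h h') (γ n)
    (fun m h1 h2 => hL2 n m h1 h2) (fun m h1 h2 => hadapted n m h1 h2) hδ hε
  have hset1 : {x | ε ≤ dist (∑ m ∈ Finset.Icc 1 (M n),
        (γ n m x - condExp (G n (m - 1)) ℙ (γ n m) x)) ((fun _ => (0:ℝ)) x)}
      = {x | ε ≤ |∑ m ∈ Finset.Icc 1 (M n),
        (γ n m x - condExp (G n (m - 1)) ℙ (γ n m) x)|} := by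
    ext x; simp [Real.dist_eq]
  have hset2 : {x | δ ≤ dist (∑ m ∈ Finset.Icc 1 (M n),
        condExp (G n (m - 1)) ℙ (fun ω' => (γ n m ω') ^ 2) x) ((fun _ => (0:ℝ)) x)}
      = {x | δ ≤ |∑ m ∈ Finset.Icc 1 (M n),
        condExp (G n (m - 1)) ℙ (fun ω' => (γ n m ω') ^ 2) x|} := by
    ext x; simp [Real.dist_eq]
  have hofReal : ENNReal.ofReal (δ / ε^2) = η'/2 := by
    have hδε : δ / ε^2 = r := by
      rw [hδ_def]; field_simp
    rw [hδε, hr_def, ENNReal.ofReal_div_of_pos (by norm_num), ENNReal.ofReal_toReal hη'top]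
    norm_num
  calc (ℙ : Measure Ω) {x | ε ≤ dist (∑ m ∈ Finset.Icc 1 (M n),
          (γ n m x - condExp (G n (m - 1)) ℙ (γ n m) x)) ((fun _ => (0:ℝ)) x)}
      = ℙ {x | ε ≤ |∑ m ∈ Finset.Icc 1 (M n),
          (γ n m x - condExp (G n (m - 1)) ℙ (γ n m) x)|} := by rw [hset1]
    _ ≤ ℙ {x | δ ≤ |∑ m ∈ Finset.Icc 1 (M n),
          condExp (G n (m - 1)) ℙ (fun ω' => (γ n m ω') ^ 2) x|}
        + ENNReal.ofReal (δ / ε ^ 2) := hkey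
    _ ≤ η'/2 + η'/2 := by
        refine add_le_add ?_ (le_of_eq hofReal)
        have := hN n hn
        rw [hset2] at this
        exact this
    _ = η' := ENNReal.add_halves _
    _ ≤ η := min_le_left _ _
end

section
/- Let σ > 0 and ω > 0, and for c₁ > 0, c₂ > 1 define β²(c₁, c₂) = (2 c₁ c₂ / ν₁(c₁,c₂)²) (ν₁(c₁,c₂) σ² + ν₂(c₁,c₂) ω²)². Then for all c₁ > 0 and c₂ > 1 one has β²(c₁, c₂) ≥ (256/(3√18)) σ³ ω, and equality holds for c₂ = 8/5 and c₁ = √(18/((c₂ − 1)(4 − c₂))) · (ω/σ) = (5/√2)(ω/σ); that is, the asymptotic conditional variance of the modulated realised volatility estimator for constant volatility σ is minimised by this choice of c₁ and c₂ and the minimal value equals (256/(3√18)) σ³ ω ≈ 20.11 σ³ ω. -/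
set_option maxHeartbeats 1000000


/-- `ν₂ = 2 min(c₂ - 1, 1) / (c₁ (c₂ - 1)²)`. -/
noncomputable def nu₂ (c₁ c₂ : ℝ) : ℝ := 2 * min (c₂ - 1) 1 / (c₁ * (c₂ - 1) ^ 2)

/-- The asymptotic conditional variance of the modulated realised volatility for
constant volatility `σ` and noise variance `w²`:
`β²(c₁, c₂) = (2c₁c₂/ν₁²) (ν₁σ² + ν₂w²)²`. -/
noncomputable def betaSq (σ w c₁ c₂ : ℝ) : ℝ :=
  2 * c₁ * c₂ / (nu₁ c₁ c₂) ^ 2 *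
    (nu₁ c₁ c₂ * σ ^ 2 + nu₂ c₁ c₂ * w ^ 2) ^ 2

/-- **Optimal tuning constants (Section 3.2 of Podolskij–Vetter (2009)).**
For all `c₁ > 0`, `c₂ > 1` one has `β²(c₁,c₂) ≥ (256/(3√18)) σ³ w`, with equality
for `c₂ = 8/5` and `c₁ = √(18/((c₂-1)(4-c₂))) · (w/σ) = (5/√2) (w/σ)`; i.e. the
asymptotic conditional variance is minimised by this choice and the minimum is
`(256/(3√18)) σ³ w ≈ 20.11 σ³ w`. -/
theorem betaSq_minimisation (σ w : ℝ) (hσ : 0 < σ) (hw : 0 < w) :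
    (∀ c₁ c₂ : ℝ, 0 < c₁ → 1 < c₂ →
      256 / (3 * Real.sqrt 18) * σ ^ 3 * w ≤ betaSq σ w c₁ c₂) ∧
    Real.sqrt (18 / ((8 / 5 - 1) * (4 - 8 / 5))) = 5 / Real.sqrt 2 ∧
    betaSq σ w (Real.sqrt (18 / ((8 / 5 - 1) * (4 - 8 / 5))) * (w / σ)) (8 / 5)
      = 256 / (3 * Real.sqrt 18) * σ ^ 3 * w := by
  have hs2 : Real.sqrt 2 ^ 2 = 2 := Real.sq_sqrt (by norm_num)
  have hs2pos : (0:ℝ) < Real.sqrt 2 := Real.sqrt_pos.mpr (by norm_num)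
  have h18 : Real.sqrt 18 = 3 * Real.sqrt 2 := by
    rw [show (18:ℝ) = 3^2*2 by norm_num, Real.sqrt_mul (by positivity),
      Real.sqrt_sq (by norm_num)]
  have hC : 256 / (3 * Real.sqrt 18) = 128 * Real.sqrt 2 / 9 := by
    rw [h18, div_eq_div_iff (by positivity) (by norm_num)]
    nlinarith [hs2]
  have hsqrt : Real.sqrt (18 / ((8 / 5 - 1) * (4 - 8 / 5))) = 5 / Real.sqrt 2 := by
    rw [show (18:ℝ) / ((8 / 5 - 1) * (4 - 8 / 5)) = 25/2 by norm_num,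
      show (25/2:ℝ) = (5 / Real.sqrt 2)^2 by rw [div_pow, hs2]; norm_num,
      Real.sqrt_sq (by positivity)]
  refine ⟨?_, hsqrt, ?_⟩
  · intro c₁ c₂ hc₁ hc₂
    set m : ℝ := min (c₂ - 1) 1 with hm_def
    set A : ℝ := 3 * c₂ - 4 + max ((2 - c₂) ^ 3) 0 with hA_def
    have hm : 0 < m := lt_min (by linarith) one_pos
    obtain ⟨hA, hkey⟩ : 0 < A ∧ 16 * A ≤ 9 * c₂ ^ 2 * m := by
      rcases le_or_gt c₂ 2 with h2 | h2
      · have hmax : max ((2 - c₂) ^ 3) 0 = (2 - c₂) ^ 3 :=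
          max_eq_left (pow_nonneg (by linarith) 3)
        have hm' : m = c₂ - 1 := min_eq_left (by linarith)
        have hAe : A = (c₂ - 1) ^ 2 * (4 - c₂) := by rw [hA_def, hmax]; ring
        constructor
        · rw [hAe]; exact mul_pos (pow_pos (by linarith) 2) (by linarith)
        · rw [hAe, hm']; nlinarith [sq_nonneg (5*c₂ - 8), hc₂]
      · have hmax : max ((2 - c₂) ^ 3) 0 = 0 :=
          max_eq_right (Odd.pow_nonpos (by decide) (by linarith))
        have hm' : m = 1 := min_eq_right (by linarith)
        have hAe : A = 3 * c₂ - 4 := by rw [hA_def, hmax]; ring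
        constructor
        · rw [hAe]; linarith
        · rw [hAe, hm']; nlinarith [sq_nonneg (3*c₂ - 8)]
    set u : ℝ := Real.sqrt (18 * m / A) * w with hu_def
    have hu2 : u ^ 2 = 18 * m / A * w ^ 2 := by
      rw [hu_def, mul_pow, Real.sq_sqrt (by positivity)]
    have hu_pos : 0 < u := by
      apply mul_pos _ hw
      exact Real.sqrt_pos.mpr (by positivity)
    have hc₂1 : (0:ℝ) < c₂ - 1 := by linarith
    have hval : betaSq σ w c₁ c₂ =
        2 * c₂ * (3 * c₁^2 * σ^2 + u^2)^2 / (9 * c₁^3) := by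
      simp only [betaSq, nu₁, nu₂, ← hm_def, ← hA_def]
      rw [hu2]
      field_simp
      ring
    have step1 : 16 * (c₁*σ)^3 * u ≤ (3 * c₁^2 * σ^2 + u^2)^2 := by
      nlinarith [mul_nonneg (sq_nonneg (u - c₁*σ)) (sq_nonneg (u + c₁*σ)),
        mul_nonneg (sq_nonneg (u - c₁*σ)) (sq_nonneg (c₁*σ))]
    have step2 : 4 * Real.sqrt 2 * w ≤ c₂ * u := by
      have hcu : c₂ * Real.sqrt (18 * m / A) = Real.sqrt (c₂^2 * (18 * m / A)) := by
        rw [Real.sqrt_mul (sq_nonneg _), Real.sqrt_sq (by linarith)]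
      have h32 : (32:ℝ) ≤ c₂^2 * (18 * m / A) := by
        rw [mul_div_assoc', le_div_iff₀ hA]; nlinarith
      have hs32 : Real.sqrt 32 = 4 * Real.sqrt 2 := by
        rw [show (32:ℝ) = 4^2*2 by norm_num, Real.sqrt_mul (by positivity),
          Real.sqrt_sq (by norm_num)]
      calc 4 * Real.sqrt 2 * w = Real.sqrt 32 * w := by rw [hs32]
        _ ≤ Real.sqrt (c₂^2 * (18 * m / A)) * w :=
            mul_le_mul_of_nonneg_right (Real.sqrt_le_sqrt h32) hw.le
        _ = c₂ * u := by rw [hu_def, ← mul_assoc, ← hcu]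
    rw [hval, hC]
    have heq : 2 * c₂ * (16 * (c₁*σ)^3 * u) / (9 * c₁^3) = 32/9 * σ^3 * (c₂ * u) := by
      field_simp
      ring
    have h1 : 128 * Real.sqrt 2 / 9 * σ ^ 3 * w ≤
        2 * c₂ * (16 * (c₁*σ)^3 * u) / (9 * c₁^3) := by
      rw [heq]
      nlinarith [mul_le_mul_of_nonneg_left step2 (le_of_lt (pow_pos hσ 3))]
    have h2 : 2 * c₂ * (16 * (c₁*σ)^3 * u) / (9 * c₁^3) ≤
        2 * c₂ * (3 * c₁^2 * σ^2 + u^2)^2 / (9 * c₁^3) := by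
      gcongr
    linarith
  · rw [hsqrt, hC]
    simp only [betaSq, nu₁, nu₂]
    rw [show ((2:ℝ) - 8/5)^3 = 8/125 by norm_num,
      max_eq_left (by norm_num : (0:ℝ) ≤ 8/125),
      min_eq_left (by norm_num : (8:ℝ)/5 - 1 ≤ 1)]
    have hσ' := hσ.ne'
    have hw' := hw.ne'
    have hs' := hs2pos.ne'
    field_simp
    ring_nf
    rw [show Real.sqrt 2 ^ 4 = (Real.sqrt 2 ^ 2) ^ 2 by ring, hs2]
    norm_num
end
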